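/- arXiv:1208.4963 — 5 statements merged into one kernel-verified Lean document; each statement's English description precedes it below -/
import Mathlib

section
/- Let X be a Banach space (over ℝ or ℂ) and T : X → X a continuous linear operator. The following conditions are equivalent: (i) there exist a sequence of real numbers (C_n) with C_n → ∞ and a sequence (E_n) of subspaces of X of finite codimension such that for every n ≥ 1 and every x ∈ E_n one has ‖T^n x‖ ≥ C_n ‖x‖; (ii) there exist a constant C > 1, a subspace E of X of finite codimension and an integer n ≥ 1 such that ‖T^n x‖ ≥ C ‖x‖ for every x ∈ E; (iii) there exist a constant C > 1, a subspace E of X of finite codimension and an integer n ≥ 1 such that for every x ∈ E there exists an integer k with 1 ≤ k ≤ n for which ‖T^k x‖ ≥ C ‖x‖. -/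
open Filter Topology

/-- A subspace `E` of `X` has finite codimension if there is a finite-dimensional
subspace `F` of `X` with `E + F = X`. -/
def FiniteCodim {𝕜 X : Type*} [DivisionRing 𝕜] [AddCommGroup X] [Module 𝕜 X]
    (E : Submodule 𝕜 X) : Prop :=
  ∃ F : Submodule 𝕜 X, FiniteDimensional 𝕜 F ∧ E ⊔ F = ⊤

section Aux
variable {𝕜 X Y : Type*} [Field 𝕜] [AddCommGroup X] [Module 𝕜 X]
  [AddCommGroup Y] [Module 𝕜 Y]

lemma finCodim_of_quot {E : Submodule 𝕜 X} (h : FiniteDimensional 𝕜 (X ⧸ E)) :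
    FiniteCodim E := by
  obtain ⟨s, hs⟩ := Module.finite_def.1 h
  let g := Function.surjInv E.mkQ_surjective
  refine ⟨Submodule.span 𝕜 (g '' s), Module.Finite.span_of_finite 𝕜 (s.finite_toSet.image g), ?_⟩
  have hmap : Submodule.map E.mkQ (Submodule.span 𝕜 (g '' s)) = ⊤ := by
    rw [Submodule.map_span, Set.image_image]
    simp only [g, Function.surjInv_eq E.mkQ_surjective]
    simpa using hs
  have := congrArg (Submodule.comap E.mkQ) hmap
  rw [Submodule.comap_map_eq, Submodule.ker_mkQ, Submodule.comap_top] at this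
  rw [sup_comm, this]

lemma quot_finite_of_finCodim {E : Submodule 𝕜 X} (h : FiniteCodim E) :
    FiniteDimensional 𝕜 (X ⧸ E) := by
  obtain ⟨F, hF, hsup⟩ := h
  apply Module.Finite.of_surjective (E.mkQ ∘ₗ F.subtype)
  intro y
  obtain ⟨x, rfl⟩ := E.mkQ_surjective y
  have hx : x ∈ E ⊔ F := hsup ▸ Submodule.mem_top
  obtain ⟨e, he, f, hf, rfl⟩ := Submodule.mem_sup.1 hx
  exact ⟨⟨f, hf⟩, by simp [Submodule.Quotient.mk_add, (Submodule.Quotient.mk_eq_zero E).2 he]⟩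

lemma finCodim_of_ker [FiniteDimensional 𝕜 Y] (g : X →ₗ[𝕜] Y) :
    FiniteCodim (LinearMap.ker g) := by
  apply finCodim_of_quot
  exact Module.Finite.equiv g.quotKerEquivRange.symm

lemma finCodim_comap (f : X →ₗ[𝕜] X) {E : Submodule 𝕜 X} (hE : FiniteCodim E) :
    FiniteCodim (E.comap f) := by
  have := quot_finite_of_finCodim hE
  have h : E.comap f = LinearMap.ker (E.mkQ ∘ₗ f) := by
    rw [LinearMap.ker_comp, Submodule.ker_mkQ]
  rw [h]; exact finCodim_of_ker _

lemma finCodim_iInf {ι : Type*} [Fintype ι] (E : ι → Submodule 𝕜 X)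
    (h : ∀ i, FiniteCodim (E i)) : FiniteCodim (⨅ i, E i) := by
  have : ∀ i, FiniteDimensional 𝕜 (X ⧸ E i) := fun i => quot_finite_of_finCodim (h i)
  have hk : (⨅ i, E i) = LinearMap.ker (LinearMap.pi fun i => (E i).mkQ) := by
    rw [LinearMap.ker_pi]; simp [Submodule.ker_mkQ]
  rw [hk]; exact finCodim_of_ker _

end Aux

section Main
variable {𝕜 X : Type*} [RCLike 𝕜] [NormedAddCommGroup X] [NormedSpace 𝕜 X]

lemma opnorm_pow_le (T : X →L[𝕜] X) (k : ℕ) : ‖T ^ k‖ ≤ (max 1 ‖T‖) ^ k := by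
  induction k with
  | zero => rw [pow_zero, pow_zero]; exact ContinuousLinearMap.norm_id_le
  | succ k ih =>
    calc ‖T ^ (k + 1)‖ = ‖T * T ^ k‖ := by rw [pow_succ']
      _ ≤ ‖T‖ * ‖T ^ k‖ := norm_mul_le _ _
      _ ≤ max 1 ‖T‖ * (max 1 ‖T‖) ^ k :=
          mul_le_mul (le_max_right _ _) ih (norm_nonneg _) (le_trans zero_le_one (le_max_left _ _))
      _ = (max 1 ‖T‖) ^ (k + 1) := by rw [pow_succ']

lemma aux21 (T : X →L[𝕜] X) {C : ℝ} {E : Submodule 𝕜 X} {n : ℕ} (hC : 1 < C)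
    (hE : FiniteCodim E) (hn : 1 ≤ n)
    (hT : ∀ x ∈ E, C * ‖x‖ ≤ ‖(T ^ n) x‖) :
    ∃ (Cs : ℕ → ℝ) (Es : ℕ → Submodule 𝕜 X), Tendsto Cs atTop atTop ∧
      (∀ m, FiniteCodim (Es m)) ∧
      ∀ m, 1 ≤ m → ∀ x ∈ Es m, Cs m * ‖x‖ ≤ ‖(T ^ m) x‖ := by
  set M : ℝ := (max 1 ‖T‖) ^ n with hM
  have hM1 : 1 ≤ M := one_le_pow₀ (le_max_left 1 ‖T‖)
  have hM0 : (0:ℝ) < M := lt_of_lt_of_le zero_lt_one hM1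
  have hC0 : (0:ℝ) < C := lt_trans zero_lt_one hC
  refine ⟨fun m => C ^ (m / n) / M,
    fun m => ⨅ j : Fin (m / n + 1), E.comap ((T ^ (n * (j:ℕ))) : X →L[𝕜] X).toLinearMap,
    ?_, ?_, ?_⟩
  · have hq : Tendsto (fun m : ℕ => m / n) atTop atTop :=
      tendsto_atTop_atTop.2 fun b => ⟨b * n, fun m hm => (Nat.le_div_iff_mul_le (by omega)).2 hm⟩
    exact ((tendsto_pow_atTop_atTop_of_one_lt hC).atTop_div_const hM0).comp hq
  · intro m
    exact finCodim_iInf _ fun j => finCodim_comap _ hE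
  · intro m hm x hx
    have hmem : ∀ j, j ≤ m / n → (T ^ (n * j)) x ∈ E := by
      intro j hj
      exact Submodule.mem_comap.1 ((Submodule.mem_iInf _).1 hx ⟨j, Nat.lt_succ_of_le hj⟩)
    have key : ∀ j, j ≤ m / n → C ^ j * ‖x‖ ≤ ‖(T ^ (n * j)) x‖ := by
      intro j
      induction j with
      | zero => intro _; simp
      | succ j ih =>
        intro hj
        have hj' : j ≤ m / n := by omega
        have step := hT _ (hmem j hj')
        have heq : (T ^ n) ((T ^ (n * j)) x) = (T ^ (n * (j + 1))) x := by
          rw [← ContinuousLinearMap.mul_apply, ← pow_add]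
          congr 2
          ring
        calc C ^ (j + 1) * ‖x‖ = C * (C ^ j * ‖x‖) := by ring
          _ ≤ C * ‖(T ^ (n * j)) x‖ := mul_le_mul_of_nonneg_left (ih hj') hC0.le
          _ ≤ ‖(T ^ n) ((T ^ (n * j)) x)‖ := step
          _ = ‖(T ^ (n * (j + 1))) x‖ := by rw [heq]
    set q := m / n with hq
    set r := m % n with hr
    have hqr : n * q + r = m := Nat.div_add_mod m n
    have hrn : r < n := Nat.mod_lt _ (by omega)
    by_cases hr0 : r = 0
    · have hmq : m = n * q := by omega
      have h1 : C ^ q / M ≤ C ^ q := div_le_self (pow_nonneg hC0.le q) hM1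
      calc C ^ q / M * ‖x‖ ≤ C ^ q * ‖x‖ :=
            mul_le_mul_of_nonneg_right h1 (norm_nonneg x)
        _ ≤ ‖(T ^ (n * q)) x‖ := key q le_rfl
        _ = ‖(T ^ m) x‖ := by rw [← hmq]
    · have hy := hmem q le_rfl
      have hstep := hT _ hy
      have he1 : (T ^ n) ((T ^ (n * q)) x) = (T ^ (n - r)) ((T ^ m) x) := by
        rw [← ContinuousLinearMap.mul_apply, ← pow_add, ← ContinuousLinearMap.mul_apply,
          ← pow_add]
        congr 2
        omega
      have hb : ‖(T ^ (n - r)) ((T ^ m) x)‖ ≤ M * ‖(T ^ m) x‖ := by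
        calc ‖(T ^ (n - r)) ((T ^ m) x)‖ ≤ ‖T ^ (n - r)‖ * ‖(T ^ m) x‖ :=
              (T ^ (n - r)).le_opNorm _
          _ ≤ M * ‖(T ^ m) x‖ := by
              apply mul_le_mul_of_nonneg_right _ (norm_nonneg _)
              refine le_trans (opnorm_pow_le T (n - r)) ?_
              exact pow_le_pow_right₀ (le_max_left 1 ‖T‖) (by omega)
      have hstep2 : C * ‖(T ^ (n * q)) x‖ ≤ M * ‖(T ^ m) x‖ := by
        rw [he1] at hstep
        linarith
      have h2 : C ^ q * ‖x‖ ≤ M * ‖(T ^ m) x‖ := by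
        nlinarith [key q le_rfl, norm_nonneg ((T ^ (n * q)) x)]
      rw [div_mul_eq_mul_div, div_le_iff₀ hM0]
      linarith [h2, mul_comm M ‖(T ^ m) x‖]

lemma aux32 (T : X →L[𝕜] X) {C : ℝ} {E : Submodule 𝕜 X} {n : ℕ} (hC : 1 < C)
    (hE : FiniteCodim E) (hn : 1 ≤ n)
    (hT : ∀ x ∈ E, ∃ k, 1 ≤ k ∧ k ≤ n ∧ C * ‖x‖ ≤ ‖(T ^ k) x‖) :
    ∃ (C' : ℝ) (E' : Submodule 𝕜 X) (m : ℕ), 1 < C' ∧ FiniteCodim E' ∧ 1 ≤ m ∧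
      ∀ x ∈ E', C' * ‖x‖ ≤ ‖(T ^ m) x‖ := by
  set M : ℝ := (max 1 ‖T‖) ^ n with hM
  have hM1 : 1 ≤ M := one_le_pow₀ (le_max_left 1 ‖T‖)
  have hM0 : (0:ℝ) < M := lt_of_lt_of_le zero_lt_one hM1
  have hC0 : (0:ℝ) < C := lt_trans zero_lt_one hC
  obtain ⟨N0, hN0⟩ : ∃ N0 : ℕ, 2 * M < C ^ N0 := pow_unbounded_of_one_lt (2 * M) hC
  have hN01 : 1 ≤ N0 := by
    by_contra h
    have : N0 = 0 := by omega
    rw [this, pow_zero] at hN0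
    linarith
  set m := n * N0 with hmdef
  have hm1 : 1 ≤ m := Nat.one_le_iff_ne_zero.2 (Nat.mul_ne_zero (by omega) (by omega))
  refine ⟨2, ⨅ j : Fin m, E.comap ((T ^ (j:ℕ)) : X →L[𝕜] X).toLinearMap, m, one_lt_two,
    finCodim_iInf _ fun j => finCodim_comap _ hE, hm1, ?_⟩
  intro x hx
  have hmem : ∀ j, j < m → (T ^ j) x ∈ E := by
    intro j hj
    exact Submodule.mem_comap.1 ((Submodule.mem_iInf _).1 hx ⟨j, hj⟩)
  have chain : ∀ d K, K < m + n → m ≤ K + d →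
      ∃ K' N, K ≤ K' ∧ m ≤ K' ∧ K' < m + n ∧ K' - K ≤ n * N ∧
        C ^ N * ‖(T ^ K) x‖ ≤ ‖(T ^ K') x‖ := by
    intro d
    induction d with
    | zero =>
      intro K h1 h2
      exact ⟨K, 0, le_rfl, by omega, h1, by omega, by simp⟩
    | succ d ih =>
      intro K h1 h2
      by_cases hK : m ≤ K
      · exact ⟨K, 0, le_rfl, hK, h1, by omega, by simp⟩
      · push_neg at hK
        obtain ⟨k, hk1, hkn, hkb⟩ := hT _ (hmem K hK)
        obtain ⟨K', N, hKK', hmK', hK'b, hsub, hnorm⟩ := ih (K + k) (by omega) (by omega)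
        have hle : K' - K ≤ n * (N + 1) := by
          have hmul : n * (N + 1) = n * N + n := by ring
          omega
        refine ⟨K', N + 1, by omega, hmK', hK'b, hle, ?_⟩
        have heq : (T ^ k) ((T ^ K) x) = (T ^ (K + k)) x := by
          rw [← ContinuousLinearMap.mul_apply, ← pow_add]
          congr 2
          omega
        calc C ^ (N + 1) * ‖(T ^ K) x‖ = C ^ N * (C * ‖(T ^ K) x‖) := by ring
          _ ≤ C ^ N * ‖(T ^ (K + k)) x‖ := by
              apply mul_le_mul_of_nonneg_left _ (pow_nonneg hC0.le N)
              rw [← heq]; exact hkb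
          _ ≤ ‖(T ^ K') x‖ := hnorm
  obtain ⟨K', N, _, hmK', hK'b, hsub, hnorm⟩ := chain m 0 (by omega) (by omega)
  simp only [pow_zero, ContinuousLinearMap.one_apply, Nat.sub_zero] at hnorm hsub
  have hNN0 : N0 ≤ N := by
    have h1 : n * N0 ≤ n * N := by omega
    exact Nat.le_of_mul_le_mul_left h1 (by omega)
  have hb : ‖(T ^ K') x‖ ≤ M * ‖(T ^ m) x‖ := by
    have heq : (T ^ K') x = (T ^ (K' - m)) ((T ^ m) x) := by
      rw [← ContinuousLinearMap.mul_apply, ← pow_add]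
      congr 2
      omega
    rw [heq]
    calc ‖(T ^ (K' - m)) ((T ^ m) x)‖ ≤ ‖T ^ (K' - m)‖ * ‖(T ^ m) x‖ :=
          (T ^ (K' - m)).le_opNorm _
      _ ≤ M * ‖(T ^ m) x‖ := by
          apply mul_le_mul_of_nonneg_right _ (norm_nonneg _)
          refine le_trans (opnorm_pow_le T (K' - m)) ?_
          exact pow_le_pow_right₀ (le_max_left 1 ‖T‖) (by omega)
  have h2 : C ^ N0 ≤ C ^ N := pow_le_pow_right₀ hC.le hNN0
  have h3 : 2 * M * ‖x‖ ≤ M * ‖(T ^ m) x‖ := by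
    nlinarith [norm_nonneg x]
  nlinarith [norm_nonneg ((T ^ m) x)]

end Main

/-- **Theorem (Banach space criterion).** Let `X` be a Banach space over `ℝ` or `ℂ` and
`T : X → X` a continuous linear operator.  The following are equivalent:
(i) there are reals `C_n → ∞` and finite-codimensional subspaces `E_n` with
`‖T^n x‖ ≥ C_n ‖x‖` for all `x ∈ E_n` and all `n ≥ 1`;
(ii) there are `C > 1`, a finite-codimensional subspace `E` and `n ≥ 1` with
`‖T^n x‖ ≥ C ‖x‖` for all `x ∈ E`;
(iii) there are `C > 1`, a finite-codimensional subspace `E` and `n ≥ 1` such that every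
`x ∈ E` satisfies `‖T^k x‖ ≥ C ‖x‖` for some `1 ≤ k ≤ n`. -/
theorem stmt_3 {𝕜 : Type*} [RCLike 𝕜] {X : Type*} [NormedAddCommGroup X] [NormedSpace 𝕜 X]
    [CompleteSpace X] (T : X →L[𝕜] X) :
    List.TFAE
      [ ∃ (C : ℕ → ℝ) (E : ℕ → Submodule 𝕜 X), Tendsto C atTop atTop ∧
          (∀ n, FiniteCodim (E n)) ∧
          ∀ n, 1 ≤ n → ∀ x ∈ E n, C n * ‖x‖ ≤ ‖(T ^ n) x‖,
        ∃ (C : ℝ) (E : Submodule 𝕜 X) (n : ℕ), 1 < C ∧ FiniteCodim E ∧ 1 ≤ n ∧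
          ∀ x ∈ E, C * ‖x‖ ≤ ‖(T ^ n) x‖,
        ∃ (C : ℝ) (E : Submodule 𝕜 X) (n : ℕ), 1 < C ∧ FiniteCodim E ∧ 1 ≤ n ∧
          ∀ x ∈ E, ∃ k, 1 ≤ k ∧ k ≤ n ∧ C * ‖x‖ ≤ ‖(T ^ k) x‖ ] := by
  tfae_have 1 → 2
  · rintro ⟨C, E, hC, hE, h⟩
    obtain ⟨n, hn1, hCn⟩ : ∃ n, 1 ≤ n ∧ 1 < C n :=
      ((eventually_ge_atTop 1).and (hC.eventually_gt_atTop 1)).exists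
    exact ⟨C n, E n, n, hCn, hE n, hn1, h n hn1⟩
  tfae_have 2 → 3
  · rintro ⟨C, E, n, h1, h2, h3, h4⟩
    exact ⟨C, E, n, h1, h2, h3, fun x hx => ⟨n, h3, le_rfl, h4 x hx⟩⟩
  tfae_have 3 → 2
  · rintro ⟨C, E, n, h1, h2, h3, h4⟩
    exact aux32 T h1 h2 h3 h4
  tfae_have 2 → 1
  · rintro ⟨C, E, n, h1, h2, h3, h4⟩
    obtain ⟨Cs, Es, hCs, hEs, h⟩ := aux21 T h1 h2 h3 h4
    exact ⟨Cs, Es, hCs, hEs, h⟩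
  tfae_finish
end

section
/- Let X be the complex space l^p with 1 ≤ p < ∞ or the complex space c_0, and let B_w : X → X be the weighted shift associated with a sequence (w_n)_{n≥1} of non-zero scalars. The following inequalities are equivalent: (1) sup_{n≥1} sup_{E ∈ cofin} inf_{x ∈ E\{0}} ‖B_w^n x‖/‖x‖ ≤ 1; (2) sup_{n≥1} sup_{N≥1} inf_{k≥N} ∏_{ν=1}^{n} |w_{ν+k}| ≤ 1; (3) sup_{n≥1} sup_{N≥1} inf_{k≥N} ∏_{ν=1}^{n} |w_{ν+k}| < ∞. -/
open Filter Topology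
open scoped ENNReal NNReal

namespace Stmt7Aux

/-- The weight product quantity. -/
noncomputable def Pe (w : ℕ → ℂ) (n k : ℕ) : ℝ≥0∞ :=
  ∏ ν ∈ Finset.Icc 1 n, (‖w (ν + k)‖₊ : ℝ≥0∞)

lemma Pe_eq_coe (w : ℕ → ℂ) (n k : ℕ) :
    Pe w n k = ((‖∏ ν ∈ Finset.Icc 1 n, w (ν + k)‖₊ : ℝ≥0) : ℝ≥0∞) := by
  rw [Pe, nnnorm_prod, ENNReal.coe_finset_prod]

lemma Pe_ne_top (w : ℕ → ℂ) (n k : ℕ) : Pe w n k ≠ ⊤ := by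
  rw [Pe_eq_coe]; exact ENNReal.coe_ne_top

lemma Pe_add (w : ℕ → ℂ) (m n k : ℕ) : Pe w (m + n) k = Pe w m k * Pe w n (m + k) := by
  unfold Pe
  have hIoc : ∀ b : ℕ, Finset.Icc 1 b = Finset.Ioc 0 b := fun b => by
    ext x; simp [Nat.lt_iff_add_one_le]
  rw [hIoc, hIoc, hIoc,
    ← Finset.prod_Ioc_consecutive _ (Nat.zero_le m) (Nat.le_add_right m n),
    show Finset.Ioc m (m+n) = Finset.Ioc (m+0) (m+n) by rw [Nat.add_zero],
    ← Finset.map_add_left_Ioc 0 n m, Finset.prod_map]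
  simp only [addLeftEmbedding_apply]
  congr 1
  refine Finset.prod_congr rfl fun ν _ => ?_
  have h : m + ν + k = ν + (m + k) := by omega
  rw [h]

/-- The liminf-type quantity. -/
noncomputable def LL (w : ℕ → ℂ) (n : ℕ) : ℝ≥0∞ :=
  ⨆ N : ℕ, ⨅ (k : ℕ) (_ : N ≤ k), Pe w n k

lemma iInf_Pe_mono (w : ℕ → ℂ) (n : ℕ) :
    Monotone fun N => ⨅ (k : ℕ) (_ : N ≤ k), Pe w n k := fun N M h =>
  le_iInf₂ fun k hk => iInf₂_le k (h.trans hk)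

lemma biSup_LL (w : ℕ → ℂ) (n : ℕ) :
    (⨆ (N : ℕ) (_ : 1 ≤ N), ⨅ (k : ℕ) (_ : N ≤ k), Pe w n k) = LL w n := by
  refine le_antisymm (iSup₂_le fun N _ => le_iSup
    (fun N => ⨅ (k : ℕ) (_ : N ≤ k), Pe w n k) N) (iSup_le fun N => ?_)
  exact le_iSup₂_of_le (N + 1) (by omega) (iInf_Pe_mono w n (by omega))

lemma LL_superadd (w : ℕ → ℂ) (m n : ℕ) : LL w m * LL w n ≤ LL w (m + n) := by
  have hLn : LL w n ≤ ⨆ N : ℕ, ⨅ (k : ℕ) (_ : N ≤ k), Pe w n (m + k) :=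
    iSup_le fun N => le_iSup_of_le N (le_iInf₂ fun k hk => iInf₂_le (m + k) (by omega))
  refine le_trans (mul_le_mul' le_rfl hLn) ?_
  rw [LL, ENNReal.iSup_mul]
  refine iSup_le fun N => ?_
  rw [ENNReal.mul_iSup]
  refine iSup_le fun M => le_iSup_of_le (max N M) (le_iInf₂ fun k hk => ?_)
  rw [Pe_add]
  exact mul_le_mul' (iInf₂_le k (le_trans (le_max_left N M) hk))
    (iInf₂_le k (le_trans (le_max_right N M) hk))

lemma AA_le_one_of_lt_top (w : ℕ → ℂ)
    (h : (⨆ (n : ℕ) (_ : 1 ≤ n), LL w n) < ⊤) :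
    (⨆ (n : ℕ) (_ : 1 ≤ n), LL w n) ≤ 1 := by
  by_contra hle
  push_neg at hle
  obtain ⟨n, hn1⟩ := lt_iSup_iff.mp hle
  obtain ⟨hn, hLn⟩ := lt_iSup_iff.mp hn1
  obtain ⟨r, hr1, hrL⟩ := ENNReal.lt_iff_exists_nnreal_btwn.mp hLn
  have hpow : ∀ j : ℕ, ((r : ℝ≥0∞)) ^ j ≤ LL w (j * n) := by
    intro j
    induction j with
    | zero =>
      simp only [pow_zero, Nat.zero_mul]
      refine le_iSup_of_le 0 (le_iInf₂ fun k _ => ?_)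
      simp [Pe]
    | succ j ih =>
      have : (j + 1) * n = j * n + n := by ring
      rw [this, pow_succ]
      exact le_trans (mul_le_mul' ih hrL.le) (LL_superadd w (j * n) n)
  have hbound : ∀ j : ℕ, ((r : ℝ≥0∞)) ^ (j + 1) ≤ ⨆ (n : ℕ) (_ : 1 ≤ n), LL w n := by
    intro j
    exact le_trans (hpow (j + 1)) (le_iSup₂_of_le ((j + 1) * n) (Nat.mul_pos (by omega) hn) le_rfl)
  obtain ⟨j, hj⟩ := pow_unbounded_of_one_lt (R := ℝ≥0)
    ((⨆ (n : ℕ) (_ : 1 ≤ n), LL w n).toNNReal) (by exact_mod_cast hr1)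
  have h1 : ((r : ℝ≥0∞)) ^ (j + 1) ≤ ((⨆ (n : ℕ) (_ : 1 ≤ n), LL w n).toNNReal : ℝ≥0∞) := by
    rw [ENNReal.coe_toNNReal h.ne]; exact hbound j
  rw [← ENNReal.coe_pow, ENNReal.coe_le_coe] at h1
  have h2 : r ^ j ≤ r ^ (j + 1) := pow_le_pow_right₀ (by exact_mod_cast hr1.le) (by omega)
  exact absurd (le_trans h2 h1) (not_le.mpr hj)


variable {X : Type*} [NormedAddCommGroup X] [NormedSpace ℂ X]

/-- key model hypothesis: coefficientwise domination of norms of finite combinations of the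
basis vectors, allowing reindexing by injections. -/
def PleHyp (e : ℕ → X) : Prop :=
  ∀ (ι : Type) (s : Finset ι) (f g : ι → ℕ), Set.InjOn f s → Set.InjOn g s →
    ∀ (a c : ι → ℂ) (r : ℝ), 0 ≤ r → (∀ i ∈ s, ‖c i‖ ≤ r) →
      ‖∑ i ∈ s, (c i * a i) • e (f i + 1)‖ ≤ r * ‖∑ i ∈ s, a i • e (g i + 1)‖

lemma Pge {e : ℕ → X} (hPle : PleHyp e) (ι : Type) (s : Finset ι) (f g : ι → ℕ)
    (hf : Set.InjOn f s) (hg : Set.InjOn g s) (a c : ι → ℂ) (r : ℝ) (hr : 0 ≤ r)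
    (hc0 : ∀ i ∈ s, c i ≠ 0) (hc : ∀ i ∈ s, r ≤ ‖c i‖) :
    r * ‖∑ i ∈ s, a i • e (g i + 1)‖ ≤ ‖∑ i ∈ s, (c i * a i) • e (f i + 1)‖ := by
  rcases eq_or_lt_of_le hr with h0 | hr0
  · rw [← h0, zero_mul]; positivity
  · have hb : ∀ i ∈ s, ‖(c i)⁻¹‖ ≤ r⁻¹ := fun i hi => by
      rw [norm_inv]
      exact inv_anti₀ hr0 (hc i hi)
    have h1 := hPle ι s g f hg hf (fun i => c i * a i) (fun i => (c i)⁻¹) r⁻¹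
      (by positivity) hb
    rw [Finset.sum_congr rfl (fun i hi => by
      rw [← mul_assoc, inv_mul_cancel₀ (hc0 i hi), one_mul])] at h1
    calc r * ‖∑ i ∈ s, a i • e (g i + 1)‖
        ≤ r * (r⁻¹ * ‖∑ i ∈ s, (c i * a i) • e (f i + 1)‖) :=
          mul_le_mul_of_nonneg_left h1 hr
      _ = ‖∑ i ∈ s, (c i * a i) • e (f i + 1)‖ := by
          rw [← mul_assoc, mul_inv_cancel₀ hr0.ne', one_mul]

lemma Tpow (e : ℕ → X) (w : ℕ → ℂ) (T : X →L[ℂ] X)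
    (hT : ∀ n : ℕ, 1 ≤ n → T (e n) = w n • e (n - 1)) :
    ∀ n k : ℕ, 1 ≤ k → (T ^ n) (e (k + n)) = (∏ ν ∈ Finset.Icc 1 n, w (ν + k)) • e k := by
  intro n
  induction n with
  | zero => intro k _; simp
  | succ n ih =>
    intro k hk
    have h1 : (T ^ (n + 1)) (e (k + (n + 1))) = (T ^ n) (T (e (k + n + 1))) := by
      rw [pow_succ, ContinuousLinearMap.mul_apply]
      rfl
    rw [h1, hT (k + n + 1) (by omega)]
    have h2 : k + n + 1 - 1 = k + n := by omega
    rw [h2, map_smul, ih k hk, smul_smul, Finset.prod_Icc_succ_top (by omega)]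
    congr 1
    have h3 : n + 1 + k = k + n + 1 := by omega
    rw [h3, mul_comm]

lemma upper (e : ℕ → X) (w : ℕ → ℂ) (T : X →L[ℂ] X) (ℓ : ℕ → X →L[ℂ] ℂ)
    (hc : ∀ k j : ℕ, ℓ k (e (j + 1)) = if k = j then 1 else 0)
    (hPle : PleHyp e)
    (hvT : ∀ n k : ℕ, 1 ≤ k → (T ^ n) (e (k + n)) = (∏ ν ∈ Finset.Icc 1 n, w (ν + k)) • e k)
    (n : ℕ) (hn : 1 ≤ n) (E : Submodule ℂ X) (hE : FiniteCodim E) :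
    (⨅ x ∈ (E : Set X) \ {0}, (‖(T ^ n) x‖₊ : ℝ≥0∞) / (‖x‖₊ : ℝ≥0∞)) ≤ LL w n := by
  by_contra hlt
  push_neg at hlt
  obtain ⟨r, hr1, hr2⟩ := ENNReal.lt_iff_exists_nnreal_btwn.mp hlt
  obtain ⟨F, hF, hEFsup⟩ := hE
  have hsel : ∀ N : ℕ, ∃ k, N + 1 ≤ k ∧ Pe w n k < r := by
    intro N
    have h1 : (⨅ (k : ℕ) (_ : N + 1 ≤ k), Pe w n k) < r :=
      lt_of_le_of_lt (le_iSup (fun N => ⨅ (k : ℕ) (_ : N ≤ k), Pe w n k) (N + 1)) hr1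
    obtain ⟨k, hk⟩ := iInf_lt_iff.mp h1
    obtain ⟨hk1, hk2⟩ := iInf_lt_iff.mp hk
    exact ⟨k, hk1, hk2⟩
  choose sel hsel1 hsel2 using hsel
  set km : ℕ → ℕ := fun i => Nat.rec (sel 0) (fun _ prev => sel prev) i with hkm
  have hkm_succ : ∀ i, km (i + 1) = sel (km i) := fun i => rfl
  have hkm1 : ∀ i, 1 ≤ km i := by
    intro i
    cases i with
    | zero => exact hsel1 0
    | succ i => rw [hkm_succ]; have := hsel1 (km i); omega
  have hkmP : ∀ i, Pe w n (km i) < r := by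
    intro i
    cases i with
    | zero => exact hsel2 0
    | succ i => rw [hkm_succ]; exact hsel2 (km i)
  have hkmono : StrictMono km := strictMono_nat_of_lt_succ fun i => by
    rw [hkm_succ]; have := hsel1 (km i); omega
  set d := Module.finrank ℂ F with hd
  obtain ⟨nn, rfl⟩ : ∃ nn, n = nn + 1 := ⟨n - 1, by omega⟩
  set u : Fin (d + 1) → X := fun i => e (km i + nn + 1) with hu
  have hind : LinearIndependent ℂ u := by
    rw [Fintype.linearIndependent_iff]
    intro g hg i
    have h1 := congrArg (ℓ (km i + nn)) hg
    rw [map_sum, map_zero] at h1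
    rw [Finset.sum_eq_single i ?_ ?_] at h1
    · rw [map_smul, hc, if_pos rfl, smul_eq_mul, mul_one] at h1
      exact h1
    · intro j _ hji
      rw [map_smul, hc, if_neg, smul_zero]
      intro hcon
      have hkij : km (i : ℕ) = km (j : ℕ) := by omega
      exact hji (Fin.ext (hkmono.injective hkij)).symm
    · intro h; exact absurd (Finset.mem_univ i) h
  set W := Submodule.span ℂ (Set.range u) with hW
  have hWfd : FiniteDimensional ℂ W := FiniteDimensional.span_of_finite ℂ (Set.finite_range u)
  have hWrank : Module.finrank ℂ W = d + 1 := by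
    rw [hW, finrank_span_eq_card hind, Fintype.card_fin]
  have hsurjQ : Function.Surjective (E.mkQ.comp F.subtype) := by
    intro y
    obtain ⟨x, rfl⟩ := E.mkQ_surjective y
    have hx : x ∈ E ⊔ F := hEFsup ▸ Submodule.mem_top
    obtain ⟨a, ha, b, hb, rfl⟩ := Submodule.mem_sup.mp hx
    refine ⟨⟨b, hb⟩, ?_⟩
    show E.mkQ b = E.mkQ (a + b)
    refine (Submodule.Quotient.eq E).mpr ?_
    have : b - (a + b) = -a := by abel
    rw [this]
    exact E.neg_mem ha
  have hQfd : Module.Finite ℂ (X ⧸ E) := Module.Finite.of_surjective _ hsurjQ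
  have hQrank : Module.finrank ℂ (X ⧸ E) ≤ d := by
    have h1 := LinearMap.finrank_range_le (E.mkQ.comp F.subtype)
    rwa [LinearMap.range_eq_top.mpr hsurjQ, finrank_top] at h1
  have hex : ∃ x : X, x ∈ E ∧ x ∈ W ∧ x ≠ 0 := by
    by_contra hcon
    push_neg at hcon
    have hker : ∀ z : W, (E.mkQ.domRestrict W) z = 0 → z = 0 := by
      intro z hz
      have hzE : (z : X) ∈ E := (Submodule.Quotient.mk_eq_zero E).mp hz
      exact Subtype.ext (hcon z hzE z.2)
    have hinj : Function.Injective (E.mkQ.domRestrict W) :=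
      LinearMap.ker_eq_bot.mp (LinearMap.ker_eq_bot'.mpr hker)
    have hle2 := LinearMap.finrank_le_finrank_of_injective hinj
    rw [hWrank] at hle2
    omega
  obtain ⟨x, hxE, hxW, hx0⟩ := hex
  obtain ⟨gg, hgg⟩ := (Submodule.mem_span_range_iff_exists_fun ℂ).mp hxW
  set cc : Fin (d + 1) → ℂ := fun i => ∏ ν ∈ Finset.Icc 1 (nn + 1), w (ν + km i) with hccdef
  have hTx : (T ^ (nn + 1)) x = ∑ i, (cc i * gg i) • e ((km i - 1) + 1) := by
    rw [← hgg, map_sum]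
    refine Finset.sum_congr rfl fun i _ => ?_
    rw [map_smul]
    show (gg i • (T ^ (nn + 1)) (e (km i + nn + 1))) = _
    rw [show km (i : ℕ) + nn + 1 = km (i : ℕ) + (nn + 1) from by omega,
      hvT (nn + 1) (km i) (hkm1 i),
      show (km (i : ℕ) - 1) + 1 = km (i : ℕ) from by have := hkm1 (i : ℕ); omega,
      smul_smul, mul_comm]
  have hnb : ∀ i : Fin (d + 1), ‖cc i‖ ≤ (r : ℝ) := by
    intro i
    have h1 := hkmP (i : ℕ)
    rw [Pe_eq_coe, ENNReal.coe_lt_coe] at h1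
    calc ‖cc i‖ = (‖cc i‖₊ : ℝ) := (coe_nnnorm _).symm
      _ ≤ (r : ℝ) := by exact_mod_cast h1.le
  have hle : ‖(T ^ (nn + 1)) x‖ ≤ (r : ℝ) * ‖x‖ := by
    rw [hTx]
    rw [← hgg]
    exact hPle (Fin (d + 1)) Finset.univ (fun i => km i - 1) (fun i => km i + nn)
      (fun a _ b _ h => by
        have h' : km (a : ℕ) - 1 = km (b : ℕ) - 1 := h
        have h1 := hkm1 (a : ℕ); have h2 := hkm1 (b : ℕ)
        exact Fin.ext (hkmono.injective (by omega)))
      (fun a _ b _ h => by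
        have h' : km (a : ℕ) + nn = km (b : ℕ) + nn := h
        exact Fin.ext (hkmono.injective (by omega)))
      gg cc (r : ℝ) r.coe_nonneg (fun i _ => hnb i)
  have hfinal : (⨅ x ∈ (E : Set X) \ {0}, (‖(T ^ (nn + 1)) x‖₊ : ℝ≥0∞) / (‖x‖₊ : ℝ≥0∞))
      ≤ (r : ℝ≥0∞) := by
    refine iInf₂_le_of_le x ⟨hxE, by simpa using hx0⟩ ?_
    refine ENNReal.div_le_of_le_mul ?_
    rw [← ENNReal.coe_mul]
    refine ENNReal.coe_le_coe.mpr ?_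
    rw [← NNReal.coe_le_coe]
    push_cast
    have hle' := hle
    push_cast at hle'
    exact hle'
  exact absurd (lt_of_lt_of_le hr2 hfinal) (lt_irrefl _)

lemma lower (e : ℕ → X) (w : ℕ → ℂ) (T : X →L[ℂ] X) (ℓ : ℕ → X →L[ℂ] ℂ)
    (hc : ∀ k j : ℕ, ℓ k (e (j + 1)) = if k = j then 1 else 0)
    (hPle : PleHyp e) (hw : ∀ m, 1 ≤ m → w m ≠ 0)
    (hvT : ∀ n k : ℕ, 1 ≤ k → (T ^ n) (e (k + n)) = (∏ ν ∈ Finset.Icc 1 n, w (ν + k)) • e k)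
    (hdense : (Submodule.span ℂ (Set.range fun j : ℕ => e (j + 1))).topologicalClosure = ⊤)
    (n N : ℕ) :
    (⨅ (k : ℕ) (_ : N ≤ k), Pe w n k) ≤
      ⨆ (E : Submodule ℂ X) (_ : FiniteCodim E),
        ⨅ x ∈ (E : Set X) \ {0}, (‖(T ^ n) x‖₊ : ℝ≥0∞) / (‖x‖₊ : ℝ≥0∞) := by
  set M := N + n with hM
  set S : Submodule ℂ X := Submodule.span ℂ (Set.range fun i : ℕ => e (M + i + 1)) with hS
  set E := S.topologicalClosure with hE
  set c0 : ℝ≥0∞ := ⨅ (k : ℕ) (_ : N ≤ k), Pe w n k with hc0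
  have hc0top : c0 ≠ ⊤ := ne_top_of_le_ne_top (Pe_ne_top w n N) (iInf₂_le N le_rfl)
  set r : ℝ≥0 := c0.toNNReal with hr
  have hrc : (r : ℝ≥0∞) = c0 := ENNReal.coe_toNNReal hc0top
  have hrP : ∀ k, N ≤ k → (r : ℝ) ≤ ‖∏ ν ∈ Finset.Icc 1 n, w (ν + k)‖ := by
    intro k hk
    have h1 : c0 ≤ Pe w n k := iInf₂_le k hk
    rw [← hrc, Pe_eq_coe, ENNReal.coe_le_coe] at h1
    calc (r : ℝ) ≤ (‖∏ ν ∈ Finset.Icc 1 n, w (ν + k)‖₊ : ℝ) := by exact_mod_cast h1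
      _ = _ := coe_nnnorm _
  have hkey : ∀ x ∈ E, (r : ℝ) * ‖x‖ ≤ ‖(T ^ n) x‖ := by
    have hclosed : IsClosed {x : X | (r : ℝ) * ‖x‖ ≤ ‖(T ^ n) x‖} :=
      isClosed_le (continuous_const.mul continuous_norm) (T ^ n).continuous.norm
    have hspan : (S : Set X) ⊆ {x : X | (r : ℝ) * ‖x‖ ≤ ‖(T ^ n) x‖} := by
      intro x hx
      rw [hS] at hx
      obtain ⟨cf, rfl⟩ := Finsupp.mem_span_range_iff_exists_finsupp.mp hx
      rw [Finsupp.sum]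
      set cc : ℕ → ℂ := fun i => ∏ ν ∈ Finset.Icc 1 n, w (ν + (N + i + 1)) with hccdef
      have hTx : (T ^ n) (∑ i ∈ cf.support, cf i • e (M + i + 1)) =
          ∑ i ∈ cf.support, (cc i * cf i) • e ((N + i) + 1) := by
        rw [map_sum]
        refine Finset.sum_congr rfl fun i _ => ?_
        rw [map_smul, show M + i + 1 = (N + i + 1) + n from by omega,
          hvT n (N + i + 1) (by omega), smul_smul, mul_comm]
      show (r : ℝ) * ‖∑ i ∈ cf.support, cf i • e (M + i + 1)‖ ≤ _
      rw [hTx]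
      have := Pge hPle ℕ cf.support (fun i => N + i) (fun i => M + i)
        (fun a _ b _ h => by have h' : N + a = N + b := h; omega)
        (fun a _ b _ h => by have h' : M + a = M + b := h; omega) cf cc (r : ℝ)
        r.coe_nonneg
        (fun i _ => Finset.prod_ne_zero_iff.mpr fun ν _ => hw _ (by omega))
        (fun i _ => hrP (N + i + 1) (by omega))
      convert this using 3 <;> omega
    intro x hxE
    have h1 : x ∈ closure (S : Set X) := by
      rw [← Submodule.topologicalClosure_coe]
      exact hxE
    exact closure_minimal hspan hclosed h1
  set F : Submodule ℂ X := Submodule.span ℂ ((fun j : ℕ => e (j + 1)) '' Set.Iio M) with hF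
  have hFfd : FiniteDimensional ℂ F :=
    FiniteDimensional.span_of_finite ℂ ((Set.finite_Iio M).image _)
  set Pr : X →L[ℂ] X := ∑ j ∈ Finset.range M, (ℓ j).smulRight (e (j + 1)) with hPr
  have hPrapp : ∀ x, Pr x = ∑ j ∈ Finset.range M, ℓ j x • e (j + 1) := by
    intro x
    rw [hPr, ContinuousLinearMap.sum_apply]
    exact Finset.sum_congr rfl fun j _ => ContinuousLinearMap.smulRight_apply ..
  have hPrv : ∀ t : ℕ, Pr (e (t + 1)) = if t < M then e (t + 1) else 0 := by
    intro t
    rw [hPrapp]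
    rw [Finset.sum_congr rfl (fun j (_ : j ∈ Finset.range M) => by
      rw [hc, ite_smul, one_smul, zero_smul]),
      Finset.sum_ite_eq' (Finset.range M) t fun j => e (j + 1)]
    simp [Finset.mem_range]
  have hsub : ∀ x : X, x - Pr x ∈ E := by
    have hcl : IsClosed {x : X | x - Pr x ∈ E} := by
      have : {x : X | x - Pr x ∈ E} = (fun x => x - Pr x) ⁻¹' (E : Set X) := rfl
      rw [this]
      exact IsClosed.preimage (continuous_id.sub Pr.continuous)
        (Submodule.isClosed_topologicalClosure S)
    have hsp : (Submodule.span ℂ (Set.range fun j : ℕ => e (j + 1)) : Set X) ⊆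
        {x | x - Pr x ∈ E} := by
      intro x hx
      refine Submodule.span_induction ?_ ?_ ?_ ?_ hx
      · rintro _ ⟨t, rfl⟩
        show e (t + 1) - Pr (e (t + 1)) ∈ E
        rw [hPrv t]
        split_ifs with ht
        · rw [sub_self]; exact E.zero_mem
        · rw [sub_zero]
          refine Submodule.le_topologicalClosure S (Submodule.subset_span ⟨t - M, ?_⟩)
          show e (M + (t - M) + 1) = e (t + 1)
          congr 1
          omega
      · show (0 : X) - Pr 0 ∈ E
        rw [map_zero, sub_zero]
        exact E.zero_mem
      · intro a b _ _ ha hb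
        show (a + b) - Pr (a + b) ∈ E
        rw [map_add]
        have : (a + b) - (Pr a + Pr b) = (a - Pr a) + (b - Pr b) := by abel
        rw [this]
        exact E.add_mem ha hb
      · intro c a _ ha
        show c • a - Pr (c • a) ∈ E
        rw [map_smul, ← smul_sub]
        exact E.smul_mem c ha
    intro x
    have hx : x ∈ closure (Submodule.span ℂ (Set.range fun j : ℕ => e (j + 1)) : Set X) := by
      have : x ∈ ((Submodule.span ℂ (Set.range fun j : ℕ =>
          e (j + 1))).topologicalClosure : Set X) := by
        rw [hdense]; trivial
      rwa [Submodule.topologicalClosure_coe] at this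
    exact closure_minimal hsp hcl hx
  have hEFC : FiniteCodim E := by
    refine ⟨F, hFfd, ?_⟩
    rw [eq_top_iff]
    intro x _
    have h2 : Pr x ∈ F := by
      rw [hPrapp]
      exact Submodule.sum_mem _ fun j hj => Submodule.smul_mem _ _
        (Submodule.subset_span ⟨j, Finset.mem_range.mp hj, rfl⟩)
    have h3 : x = (x - Pr x) + Pr x := by abel
    rw [h3]
    exact Submodule.add_mem_sup (hsub x) h2
  refine le_iSup₂_of_le E hEFC (le_iInf₂ fun x hx => ?_)
  have hx0 : x ≠ 0 := fun h => hx.2 (by simp [h])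
  rw [← hrc,
    ENNReal.le_div_iff_mul_le (Or.inl (ENNReal.coe_ne_zero.mpr (nnnorm_ne_zero_iff.mpr hx0)))
      (Or.inl ENNReal.coe_ne_top), ← ENNReal.coe_mul]
  refine ENNReal.coe_le_coe.mpr ?_
  rw [← NNReal.coe_le_coe]
  push_cast
  have hk := hkey x hx.1
  push_cast at hk
  exact hk


lemma models (e : ℕ → X)
    (hX : (∃ (pr : ℝ≥0∞) (_ : Fact (1 ≤ pr)), pr ≠ ⊤ ∧
            ∃ φ : X ≃ₗᵢ[ℂ] lp (fun _ : ℕ => ℂ) pr,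
              ∀ n k : ℕ, (φ (e (n + 1)) : ℕ → ℂ) k = if k = n then 1 else 0) ∨
          (∃ φ : X ≃ₗᵢ[ℂ] ZeroAtInftyContinuousMap ℕ ℂ,
              ∀ n k : ℕ, (φ (e (n + 1))) k = if k = n then 1 else 0)) :
    ∃ ℓ : ℕ → X →L[ℂ] ℂ,
      (∀ k j : ℕ, ℓ k (e (j + 1)) = if k = j then 1 else 0) ∧
      PleHyp e ∧
      (Submodule.span ℂ (Set.range fun j : ℕ => e (j + 1))).topologicalClosure = ⊤ := by
  rcases hX with ⟨pr, hpr, hprtop, φ, hφ⟩ | ⟨φ, hφ⟩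
  · -- ℓᵖ case
    haveI := hpr
    have hp0 : pr ≠ 0 := (lt_of_lt_of_le zero_lt_one hpr.out).ne'
    have ht : 0 < pr.toReal := ENNReal.toReal_pos hp0 hprtop
    set ev : ℕ → lp (fun _ : ℕ => ℂ) pr →L[ℂ] ℂ := fun k =>
      LinearMap.mkContinuous
        { toFun := fun y => y k
          map_add' := fun y z => by simp [lp.coeFn_add]
          map_smul' := fun c y => by simp [lp.coeFn_smul] }
        1 (fun y => by show ‖y k‖ ≤ 1 * ‖y‖; simpa using lp.norm_apply_le_norm hp0 y k) with hev
    set ℓ : ℕ → X →L[ℂ] ℂ :=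
      fun k => (ev k).comp φ.toLinearIsometry.toContinuousLinearMap with hℓ
    have hcoord : ∀ k j : ℕ, ℓ k (e (j + 1)) = if k = j then 1 else 0 := fun k j => hφ j k
    have hsingle : ∀ (j : ℕ) (b : ℂ), φ (b • e (j + 1)) = lp.single pr j b := by
      intro j b
      apply lp.ext
      funext k
      have h1 : (φ (b • e (j + 1)) : ℕ → ℂ) k = b * (if k = j then 1 else 0) := by
        rw [map_smul, lp.coeFn_smul]
        simp [hφ j k]
      by_cases h : k = j
      · subst h
        rw [h1, if_pos rfl, mul_one]
        exact (lp.single_apply_self (E := fun _ : ℕ => ℂ) pr k b).symm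
      · rw [h1, if_neg h, mul_zero]
        exact (lp.single_apply_ne (E := fun _ : ℕ => ℂ) pr j b h).symm
    refine ⟨ℓ, hcoord, ?_, ?_⟩
    · -- PleHyp
      intro ι s f g hf hg a c r hr hcb
      have hnormsum : ∀ (h : ι → ℕ), Set.InjOn h s → ∀ b : ι → ℂ,
          ‖∑ i ∈ s, b i • e (h i + 1)‖ ^ pr.toReal = ∑ i ∈ s, ‖b i‖ ^ pr.toReal := by
        intro h hinj b
        have hmap : φ (∑ i ∈ s, b i • e (h i + 1)) = ∑ i ∈ s, lp.single pr (h i) (b i) := by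
          rw [map_sum]
          exact Finset.sum_congr rfl fun i _ => hsingle (h i) (b i)
        rw [← φ.norm_map (∑ i ∈ s, b i • e (h i + 1)), hmap]
        set C : ℕ → ℂ := fun j => ∑ i' ∈ s.filter (fun i' => h i' = j), b i' with hC0
        have hC : ∀ i ∈ s, C (h i) = b i := by
          intro i hi
          have hfil : s.filter (fun i' => h i' = h i) = {i} := by
            ext i'
            simp only [Finset.mem_filter, Finset.mem_singleton]
            constructor
            · rintro ⟨hi', heq⟩; exact hinj hi' hi heq
            · rintro rfl; exact ⟨hi, rfl⟩
          show (∑ i' ∈ s.filter (fun i' => h i' = h i), b i') = b i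
          rw [hfil, Finset.sum_singleton]
        have hinj' : ∀ i ∈ s, ∀ i' ∈ s, h i = h i' → i = i' := fun i hi i' hi' hh =>
          hinj hi hi' hh
        have himg : (∑ i ∈ s, lp.single pr (h i) (b i)) =
            ∑ j ∈ s.image h, lp.single pr j (C j) := by
          rw [Finset.sum_image hinj']
          exact Finset.sum_congr rfl fun i hi => by rw [hC i hi]
        rw [himg, lp.norm_sum_single ht, Finset.sum_image hinj']
        exact Finset.sum_congr rfl fun i hi => by rw [hC i hi]
      have hL := hnormsum f hf (fun i => c i * a i)
      have hR := hnormsum g hg a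
      have key : ‖∑ i ∈ s, (c i * a i) • e (f i + 1)‖ ^ pr.toReal ≤
          (r * ‖∑ i ∈ s, a i • e (g i + 1)‖) ^ pr.toReal := by
        rw [hL, Real.mul_rpow hr (norm_nonneg _), hR, Finset.mul_sum]
        refine Finset.sum_le_sum fun i hi => ?_
        rw [← Real.mul_rpow hr (norm_nonneg _)]
        refine Real.rpow_le_rpow (norm_nonneg _) ?_ ht.le
        rw [norm_mul]
        exact mul_le_mul_of_nonneg_right (hcb i hi) (norm_nonneg _)
      by_contra hcontra
      push_neg at hcontra
      have h2 := Real.rpow_lt_rpow (by positivity) hcontra ht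
      exact absurd key (not_le.mpr h2)
    · -- density
      rw [eq_top_iff]
      intro x _
      rw [← SetLike.mem_coe, Submodule.topologicalClosure_coe]
      have hhs := lp.hasSum_single hprtop (φ x)
      have htend : Filter.Tendsto
          (fun sfin : Finset ℕ => ∑ i ∈ sfin, ((φ x : ℕ → ℂ) i) • e (i + 1))
          Filter.atTop (𝓝 x) := by
        have h2 := (φ.symm.continuous.tendsto (φ x)).comp hhs
        rw [φ.symm_apply_apply] at h2
        refine h2.congr fun sfin => ?_
        show φ.symm (∑ i ∈ sfin, lp.single pr i ((φ x : ℕ → ℂ) i)) = _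
        rw [map_sum]
        exact Finset.sum_congr rfl fun i _ => by
          rw [← hsingle i ((φ x : ℕ → ℂ) i), φ.symm_apply_apply]
      exact mem_closure_of_tendsto htend (Filter.Eventually.of_forall fun sfin =>
        Submodule.sum_mem _ fun i _ =>
          Submodule.smul_mem _ _ (Submodule.subset_span ⟨i, rfl⟩))
  · -- c₀ case
    have hevb : ∀ (y : ZeroAtInftyContinuousMap ℕ ℂ) (k : ℕ), ‖y k‖ ≤ ‖y‖ := by
      intro y k
      calc ‖y k‖ = ‖y.toBCF k‖ := rfl
        _ ≤ ‖y.toBCF‖ := BoundedContinuousFunction.norm_coe_le_norm _ _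
        _ = ‖y‖ := ZeroAtInftyContinuousMap.norm_toBCF_eq_norm
    set ev : ℕ → ZeroAtInftyContinuousMap ℕ ℂ →L[ℂ] ℂ := fun k =>
      LinearMap.mkContinuous
        { toFun := fun y => y k
          map_add' := fun y z => rfl
          map_smul' := fun c y => rfl }
        1 (fun y => by simpa using hevb y k) with hev
    set ℓ : ℕ → X →L[ℂ] ℂ :=
      fun k => (ev k).comp φ.toLinearIsometry.toContinuousLinearMap with hℓ
    have hcoord : ∀ k j : ℕ, ℓ k (e (j + 1)) = if k = j then 1 else 0 := fun k j => hφ j k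
    have hcoordsum : ∀ (ι : Type) (s : Finset ι) (h : ι → ℕ) (b : ι → ℂ) (k : ℕ),
        (φ (∑ i ∈ s, b i • e (h i + 1))) k = ∑ i ∈ s, b i * (if k = h i then 1 else 0) := by
      intro ι s h b k
      have h1 : φ (∑ i ∈ s, b i • e (h i + 1)) = ∑ i ∈ s, b i • φ (e (h i + 1)) := by
        rw [map_sum]
        exact Finset.sum_congr rfl fun i _ => map_smul φ (b i) _
      rw [h1]
      calc (∑ i ∈ s, b i • φ (e (h i + 1))) k = ev k (∑ i ∈ s, b i • φ (e (h i + 1))) := rfl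
        _ = ∑ i ∈ s, ev k (b i • φ (e (h i + 1))) := map_sum (ev k) _ s
        _ = ∑ i ∈ s, b i * (if k = h i then 1 else 0) := by
            refine Finset.sum_congr rfl fun i _ => ?_
            rw [map_smul, smul_eq_mul]
            congr 1
            exact hφ (h i) k
    refine ⟨ℓ, hcoord, ?_, ?_⟩
    · -- PleHyp
      intro ι s f g hf hg a c r hr hcb
      have hRnorm : ∀ i ∈ s, ‖a i‖ ≤ ‖∑ i' ∈ s, a i' • e (g i' + 1)‖ := by
        intro i hi
        have h1 : (φ (∑ i' ∈ s, a i' • e (g i' + 1))) (g i) = a i := by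
          rw [hcoordsum ι s g a (g i), Finset.sum_eq_single i ?_ ?_]
          · rw [if_pos rfl, mul_one]
          · intro j hj hji
            rw [if_neg (fun hcon => hji (hg hj hi hcon.symm)), mul_zero]
          · intro hns; exact absurd hi hns
        calc ‖a i‖ = ‖(φ (∑ i' ∈ s, a i' • e (g i' + 1))) (g i)‖ := by rw [h1]
          _ ≤ ‖φ (∑ i' ∈ s, a i' • e (g i' + 1))‖ := hevb _ _
          _ = ‖∑ i' ∈ s, a i' • e (g i' + 1)‖ := φ.norm_map _
      rw [← φ.norm_map (∑ i ∈ s, (c i * a i) • e (f i + 1)),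
        ← ZeroAtInftyContinuousMap.norm_toBCF_eq_norm]
      refine (BoundedContinuousFunction.norm_le
        (mul_nonneg hr (norm_nonneg _))).mpr fun k => ?_
      show ‖(φ (∑ i ∈ s, (c i * a i) • e (f i + 1))) k‖ ≤ r * ‖∑ i ∈ s, a i • e (g i + 1)‖
      rw [hcoordsum ι s f (fun i => c i * a i) k]
      by_cases hk : ∃ i ∈ s, f i = k
      · obtain ⟨i0, hi0, rfl⟩ := hk
        rw [Finset.sum_eq_single i0 ?_ ?_]
        · rw [if_pos rfl, mul_one, norm_mul]
          exact mul_le_mul (hcb i0 hi0) (hRnorm i0 hi0) (norm_nonneg _) hr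
        · intro j hj hji
          rw [if_neg (fun hcon => hji (hf hj hi0 hcon.symm)), mul_zero]
        · intro hns; exact absurd hi0 hns
      · push_neg at hk
        rw [Finset.sum_eq_zero (fun j hj => by
          rw [if_neg (fun hcon => hk j hj hcon.symm), mul_zero]), norm_zero]
        exact mul_nonneg hr (norm_nonneg _)
    · -- density
      rw [eq_top_iff]
      intro x _
      rw [← SetLike.mem_coe, Submodule.topologicalClosure_coe]
      refine Metric.mem_closure_iff.mpr fun ε hε => ?_
      have hten : Filter.Tendsto (fun k => (φ x) k) Filter.atTop (𝓝 0) := by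
        have h0 := ZeroAtInftyContinuousMap.zero_at_infty' (φ x)
        rwa [_root_.cocompact_eq_atTop] at h0
      have hev2 : ∀ᶠ k in Filter.atTop, ‖(φ x) k‖ < ε / 2 := by
        have h3 := hten.eventually (Metric.ball_mem_nhds (0 : ℂ) (half_pos hε))
        refine h3.mono fun k hk => ?_
        simpa [dist_zero_right] using hk
      obtain ⟨M, hM⟩ := Filter.eventually_atTop.mp hev2
      refine ⟨∑ j ∈ Finset.range M, ((φ x) j) • e (j + 1), Submodule.sum_mem _ fun j _ =>
        Submodule.smul_mem _ _ (Submodule.subset_span ⟨j, rfl⟩), ?_⟩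
      rw [dist_eq_norm, ← φ.norm_map (x - ∑ j ∈ Finset.range M, ((φ x) j) • e (j + 1)),
        map_sub, ← ZeroAtInftyContinuousMap.norm_toBCF_eq_norm]
      refine lt_of_le_of_lt ((BoundedContinuousFunction.norm_le
        (le_of_lt (half_pos hε))).mpr fun k => ?_) (half_lt_self hε)
      show ‖(φ x - φ (∑ j ∈ Finset.range M, ((φ x) j) • e (j + 1))) k‖ ≤ ε / 2
      have h2 : (φ x - φ (∑ j ∈ Finset.range M, ((φ x) j) • e (j + 1))) k
          = (φ x) k - (φ (∑ j ∈ Finset.range M, ((φ x) j) • e (j + 1))) k := rfl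
      rw [h2, hcoordsum ℕ (Finset.range M) (fun j => j) (fun j => (φ x) j) k]
      by_cases hkM : k < M
      · rw [Finset.sum_eq_single k ?_ ?_]
        · rw [if_pos rfl, mul_one, sub_self, norm_zero]
          exact le_of_lt (half_pos hε)
        · intro j _ hjk
          rw [if_neg (fun hcon => hjk hcon.symm), mul_zero]
        · intro hns; exact absurd (Finset.mem_range.mpr hkM) hns
      · rw [Finset.sum_eq_zero (fun j hj => by
          rw [if_neg, mul_zero]
          intro hcon
          rw [hcon] at hkM
          exact hkM (Finset.mem_range.mp hj)), sub_zero]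
        exact le_of_lt (hM k (by omega))

end Stmt7Aux

/-- **Proposition 3.1.** Let `X` be the complex space `ℓ^p` (`1 ≤ p < ∞`) or `c₀` — encoded
by a linear isometric isomorphism `φ` onto Mathlib's `lp` space (with `1 ≤ p`, `p ≠ ∞`) or
onto `C₀(ℕ, ℂ)`, carrying the canonical basis `(e_n)_{n≥1}` (with `e 0 = 0`) to the unit
coordinate vectors — and let `B_w : X → X` (here `T`) be the weighted shift given by
`T e_n = w_n • e_{n-1}` for a sequence `(w_n)_{n≥1}` of non-zero scalars.  The following are
equivalent (suprema/infima taken in `[0,∞]`):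
(1) `sup_{n≥1} sup_{E ∈ cofin} inf_{x ∈ E \ {0}} ‖T^n x‖ / ‖x‖ ≤ 1`;
(2) `sup_{n≥1} sup_{N≥1} inf_{k≥N} ∏_{ν=1}^{n} |w_{ν+k}| ≤ 1`;
(3) `sup_{n≥1} sup_{N≥1} inf_{k≥N} ∏_{ν=1}^{n} |w_{ν+k}| < ∞`. -/
theorem stmt_7 {X : Type*} [NormedAddCommGroup X] [NormedSpace ℂ X] [CompleteSpace X]
    (e : ℕ → X) (he0 : e 0 = 0)
    (hX : (∃ (pr : ℝ≥0∞) (_ : Fact (1 ≤ pr)), pr ≠ ⊤ ∧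
            ∃ φ : X ≃ₗᵢ[ℂ] lp (fun _ : ℕ => ℂ) pr,
              ∀ n k : ℕ, (φ (e (n + 1)) : ℕ → ℂ) k = if k = n then 1 else 0) ∨
          (∃ φ : X ≃ₗᵢ[ℂ] ZeroAtInftyContinuousMap ℕ ℂ,
              ∀ n k : ℕ, (φ (e (n + 1))) k = if k = n then 1 else 0))
    (w : ℕ → ℂ) (hw : ∀ n, 1 ≤ n → w n ≠ 0)
    (T : X →L[ℂ] X) (hT : ∀ n : ℕ, 1 ≤ n → T (e n) = w n • e (n - 1)) :
    List.TFAE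
      [ (⨆ (n : ℕ) (_ : 1 ≤ n) (E : Submodule ℂ X) (_ : FiniteCodim E),
            ⨅ x ∈ (E : Set X) \ {0}, (‖(T ^ n) x‖₊ : ℝ≥0∞) / (‖x‖₊ : ℝ≥0∞)) ≤ 1,
        (⨆ (n : ℕ) (_ : 1 ≤ n) (N : ℕ) (_ : 1 ≤ N), ⨅ (k : ℕ) (_ : N ≤ k),
            ∏ ν ∈ Finset.Icc 1 n, (‖w (ν + k)‖₊ : ℝ≥0∞)) ≤ 1,
        (⨆ (n : ℕ) (_ : 1 ≤ n) (N : ℕ) (_ : 1 ≤ N), ⨅ (k : ℕ) (_ : N ≤ k),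
            ∏ ν ∈ Finset.Icc 1 n, (‖w (ν + k)‖₊ : ℝ≥0∞)) < ⊤ ] := by
  obtain ⟨ℓ, hcoord, hPle, hdense⟩ := Stmt7Aux.models e hX
  have hvT := Stmt7Aux.Tpow e w T hT
  have hA : (⨆ (n : ℕ) (_ : 1 ≤ n) (N : ℕ) (_ : 1 ≤ N), ⨅ (k : ℕ) (_ : N ≤ k),
      ∏ ν ∈ Finset.Icc 1 n, (‖w (ν + k)‖₊ : ℝ≥0∞)) =
      ⨆ (n : ℕ) (_ : 1 ≤ n), Stmt7Aux.LL w n := by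
    refine iSup_congr fun n => iSup_congr fun _ => ?_
    exact Stmt7Aux.biSup_LL w n
  have hQA_le : (⨆ (n : ℕ) (_ : 1 ≤ n) (E : Submodule ℂ X) (_ : FiniteCodim E),
      ⨅ x ∈ (E : Set X) \ {0}, (‖(T ^ n) x‖₊ : ℝ≥0∞) / (‖x‖₊ : ℝ≥0∞)) ≤
      ⨆ (n : ℕ) (_ : 1 ≤ n), Stmt7Aux.LL w n := by
    refine iSup₂_le fun n hn => ?_
    refine le_iSup₂_of_le n hn ?_
    exact iSup₂_le fun E hE => Stmt7Aux.upper e w T ℓ hcoord hPle hvT n hn E hE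
  have hAQ_le : (⨆ (n : ℕ) (_ : 1 ≤ n), Stmt7Aux.LL w n) ≤
      ⨆ (n : ℕ) (_ : 1 ≤ n) (E : Submodule ℂ X) (_ : FiniteCodim E),
      ⨅ x ∈ (E : Set X) \ {0}, (‖(T ^ n) x‖₊ : ℝ≥0∞) / (‖x‖₊ : ℝ≥0∞) := by
    refine iSup₂_le fun n hn => ?_
    rw [← Stmt7Aux.biSup_LL w n]
    refine iSup₂_le fun N _ => ?_
    refine le_trans (Stmt7Aux.lower e w T ℓ hcoord hPle hw hvT hdense n N) ?_
    exact le_iSup₂_of_le n hn le_rfl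
  tfae_have 1 → 2 := by
    intro h
    rw [hA]
    exact le_trans hAQ_le h
  tfae_have 2 → 1 := by
    intro h
    rw [hA] at h
    exact le_trans hQA_le h
  tfae_have 2 → 3 := fun h => lt_of_le_of_lt h ENNReal.one_lt_top
  tfae_have 3 → 2 := by
    intro h
    rw [hA] at h ⊢
    exact Stmt7Aux.AA_le_one_of_lt_top w h
  tfae_finish
end

section
/- Let (w_n)_{n≥1} be a sequence of non-zero scalars. Then sup_{n≥1} sup_{N≥1} inf_{k≥N} ∏_{ν=1}^{n} |w_{ν+k}| > 1 if and only if sup_{n≥1} inf_{k≥1} ∏_{ν=1}^{n} |w_{ν+k}| = ∞. -/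
open Filter Topology
open scoped ENNReal NNReal

private noncomputable def Fw {𝕜 : Type*} [RCLike 𝕜] (w : ℕ → 𝕜) (n k : ℕ) : ℝ≥0∞ :=
  ∏ ν ∈ Finset.Icc 1 n, (‖w (ν + k)‖₊ : ℝ≥0∞)

private lemma Fw_succ {𝕜 : Type*} [RCLike 𝕜] (w : ℕ → 𝕜) (n k : ℕ) :
    Fw w (n + 1) k = Fw w n k * ‖w (n + 1 + k)‖₊ := by
  unfold Fw
  rw [Finset.prod_Icc_succ_top (by omega)]

private lemma Fw_add {𝕜 : Type*} [RCLike 𝕜] (w : ℕ → 𝕜) (a b k : ℕ) :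
    Fw w (a + b) k = Fw w a k * Fw w b (a + k) := by
  induction b with
  | zero => simp [Fw]
  | succ b ih =>
      have h1 : a + (b + 1) = a + b + 1 := by omega
      have h2 : a + b + 1 + k = b + 1 + (a + k) := by omega
      rw [h1, Fw_succ, ih, Fw_succ, mul_assoc, h2]

private lemma Fw_ne_zero {𝕜 : Type*} [RCLike 𝕜] {w : ℕ → 𝕜} (hw : ∀ n, 1 ≤ n → w n ≠ 0)
    (n k : ℕ) : Fw w n k ≠ 0 := by
  unfold Fw
  rw [Finset.prod_ne_zero_iff]
  intro ν hν
  simp only [Finset.mem_Icc] at hν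
  simp only [ne_eq, ENNReal.coe_eq_zero, nnnorm_eq_zero]
  exact hw _ (by omega)

private lemma Fw_blocks {𝕜 : Type*} [RCLike 𝕜] (w : ℕ → 𝕜) {n : ℕ} {δ : ℝ≥0∞}
    (hδ : ∀ j, 1 ≤ j → δ ≤ Fw w n j) :
    ∀ m k, 1 ≤ k → δ ^ m ≤ Fw w (m * n) k := by
  intro m
  induction m with
  | zero => simp [Fw]
  | succ m ih =>
      intro k hk
      have h1 : (m + 1) * n = m * n + n := by ring
      rw [h1, Fw_add, pow_succ]
      exact mul_le_mul' (ih k hk) (hδ _ (by omega))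

private lemma Fw_main {𝕜 : Type*} [RCLike 𝕜] (w : ℕ → 𝕜) {n N : ℕ} {δ c : ℝ≥0∞}
    (hn : 1 ≤ n)
    (hδ : ∀ j, 1 ≤ j → δ ≤ Fw w n j) (hc : ∀ j, N ≤ j → c ≤ Fw w n j) :
    ∀ j k, 1 ≤ k → δ ^ N * c ^ j ≤ Fw w ((N + j) * n) k := by
  intro j
  induction j with
  | zero => simpa using Fw_blocks w hδ N
  | succ j ih =>
      intro k hk
      have h1 : (N + (j + 1)) * n = (N + j) * n + n := by ring
      rw [h1, Fw_add, pow_succ, ← mul_assoc]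
      refine mul_le_mul' (ih k hk) (hc _ ?_)
      have : N + j ≤ (N + j) * n := Nat.le_mul_of_pos_right _ (by omega)
      omega

/-- **Proposition (weights).** For a sequence `(w_n)_{n ≥ 1}` of non-zero scalars (in `ℝ` or
`ℂ`), one has `sup_{n≥1} sup_{N≥1} inf_{k≥N} ∏_{ν=1}^{n} |w_{ν+k}| > 1` if and only if
`sup_{n≥1} inf_{k≥1} ∏_{ν=1}^{n} |w_{ν+k}| = ∞`, the suprema and infima being taken
in `[0, ∞]`. -/
theorem stmt_8 {𝕜 : Type*} [RCLike 𝕜] (w : ℕ → 𝕜) (hw : ∀ n, 1 ≤ n → w n ≠ 0) :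
    1 < (⨆ (n : ℕ) (_ : 1 ≤ n) (N : ℕ) (_ : 1 ≤ N), ⨅ (k : ℕ) (_ : N ≤ k),
          ∏ ν ∈ Finset.Icc 1 n, (‖w (ν + k)‖₊ : ℝ≥0∞)) ↔
      (⨆ (n : ℕ) (_ : 1 ≤ n), ⨅ (k : ℕ) (_ : 1 ≤ k),
          ∏ ν ∈ Finset.Icc 1 n, (‖w (ν + k)‖₊ : ℝ≥0∞)) = ⊤ := by
  have hFw : ∀ n k : ℕ, (∏ ν ∈ Finset.Icc 1 n, (‖w (ν + k)‖₊ : ℝ≥0∞)) = Fw w n k :=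
    fun n k => rfl
  simp only [hFw]
  constructor
  · -- hard direction
    intro h
    rw [lt_iSup_iff] at h
    obtain ⟨n, h⟩ := h
    rw [lt_iSup_iff] at h
    obtain ⟨hn, h⟩ := h
    rw [lt_iSup_iff] at h
    obtain ⟨N, h⟩ := h
    rw [lt_iSup_iff] at h
    obtain ⟨hN, h⟩ := h
    set c : ℝ≥0∞ := ⨅ (k : ℕ) (_ : N ≤ k), Fw w n k with hc
    have hc1 : 1 < c := h
    have hcle : ∀ k, N ≤ k → c ≤ Fw w n k := fun k hk => iInf_le_of_le k (iInf_le _ hk)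
    -- a uniform positive lower bound δ for Fw w n j over all j ≥ 1
    set δ : ℝ≥0∞ := ∏ j ∈ Finset.Icc 1 N, min 1 (Fw w n j) with hδdef
    have hδ0 : δ ≠ 0 := by
      rw [hδdef, Finset.prod_ne_zero_iff]
      intro j _
      simp only [ne_eq]
      rcases lt_or_ge 1 (Fw w n j) with h' | h'
      · rw [min_eq_left h'.le]; exact one_ne_zero
      · rw [min_eq_right h']; exact Fw_ne_zero hw n j
    have hδle : ∀ j, 1 ≤ j → δ ≤ Fw w n j := by
      intro j hj
      rcases le_or_gt N j with hNj | hjN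
      · refine le_trans ?_ (le_trans hc1.le (hcle j hNj))
        rw [hδdef]
        exact Finset.prod_le_one (fun _ _ => zero_le') (fun _ _ => min_le_left _ _)
      · have hmem : j ∈ Finset.Icc 1 N := by simp; omega
        calc δ = min 1 (Fw w n j) * ∏ i ∈ (Finset.Icc 1 N).erase j, min 1 (Fw w n i) := by
              rw [hδdef, ← Finset.mul_prod_erase _ _ hmem]
          _ ≤ min 1 (Fw w n j) * 1 := by
              refine mul_le_mul' le_rfl
                (Finset.prod_le_one (fun _ _ => zero_le') (fun _ _ => min_le_left _ _))
          _ ≤ Fw w n j := by rw [mul_one]; exact min_le_right _ _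
    -- conclude
    rw [eq_top_iff]
    have key : ∀ j : ℕ, δ ^ N * c ^ j ≤
        ⨆ (m : ℕ) (_ : 1 ≤ m), ⨅ (k : ℕ) (_ : 1 ≤ k), Fw w m k := by
      intro j
      have hm : 1 ≤ (N + j) * n := Nat.one_le_iff_ne_zero.mpr (by positivity)
      refine le_iSup_of_le ((N + j) * n) (le_iSup_of_le hm ?_)
      exact le_iInf fun k => le_iInf fun hk => Fw_main w hn hδle hcle j k hk
    have hsup : (⨆ j : ℕ, δ ^ N * c ^ j) = ⊤ := by
      have hctop : (⨆ j : ℕ, c ^ j) = ⊤ := by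
        rw [iSup_eq_top]
        intro b hb
        have ht : Filter.Tendsto (fun j : ℕ => c ^ j) atTop (𝓝 ⊤) :=
          ENNReal.tendsto_pow_atTop_nhds_top_iff.mpr hc1
        exact (ht.eventually (Ioi_mem_nhds hb)).exists
      rw [← ENNReal.mul_iSup, hctop, ENNReal.mul_top (pow_ne_zero _ hδ0)]
    calc (⊤ : ℝ≥0∞) = ⨆ j : ℕ, δ ^ N * c ^ j := hsup.symm
      _ ≤ _ := iSup_le key
  · -- easy direction
    intro h
    have hle : (⨆ (n : ℕ) (_ : 1 ≤ n), ⨅ (k : ℕ) (_ : 1 ≤ k), Fw w n k) ≤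
        ⨆ (n : ℕ) (_ : 1 ≤ n) (N : ℕ) (_ : 1 ≤ N), ⨅ (k : ℕ) (_ : N ≤ k), Fw w n k := by
      refine iSup_mono fun n => iSup_mono' fun hn => ⟨hn, ?_⟩
      exact le_iSup_of_le 1 (le_iSup_of_le le_rfl le_rfl)
    rw [h] at hle
    exact lt_of_lt_of_le (by norm_num) hle
end

section
/- Let X be a Fréchet sequence space with a continuous norm containing all unit sequences e_k, let (p_j) be an increasing sequence of norms defining the topology of X, and let B_w : X → X be a weighted shift. Then the following assertions are equivalent: (i) there exists J ≥ 1 such that for every j ≥ 1 one has sup_{n≥1} sup_{N≥1} inf_{k≥N} p_J(B_w^n e_k)/p_j(e_k) = ∞; (ii) there exists J ≥ 1 such that for every j ≥ 1 one has sup_{n≥1} sup_{N≥1} inf_{k≥N} max_{1≤m≤n} p_J(B_w^m e_k)/p_j(e_k) > 1. -/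
open Filter Topology
open scoped ENNReal NNReal

/-- Chain iteration lemma: if from every `k ≥ N0` one can step back by some
`m ∈ [1, n0]` gaining `δ`, then from any `k` one can walk back to just above a
barrier `B`, gaining `δ` per step. -/
private lemma stmt13_chain (g : ℕ → ℝ) (n0 N0 : ℕ) (δ : ℝ)
    (hA : ∀ k, N0 ≤ k → ∃ m, 1 ≤ m ∧ m ≤ n0 ∧ g k + δ ≤ g (k - m))
    (B : ℕ) (hB : N0 ≤ B) :
    ∀ k, B < k + n0 → ∃ l r, B < l + n0 ∧ l ≤ B ∧ k - l ≤ r * n0 ∧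
      g k + (r : ℝ) * δ ≤ g l := by
  intro k
  induction k using Nat.strong_induction_on with
  | _ k ih =>
    intro hk
    by_cases hkB : k ≤ B
    · exact ⟨k, 0, hk, hkB, by simp, by simp⟩
    · push_neg at hkB
      obtain ⟨m, hm1, hmn, hgm⟩ := hA k (le_trans hB hkB.le)
      have hkm : k - m < k := Nat.sub_lt (by omega) hm1
      have h2 : B < (k - m) + n0 := by omega
      obtain ⟨l, r, h3, h4, h5, h6⟩ := ih (k - m) hkm h2
      refine ⟨l, r + 1, h3, h4, ?_, ?_⟩
      · have e1 : k - l ≤ (k - m - l) + m := by omega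
        have e2 : (k - m - l) + m ≤ r * n0 + n0 := add_le_add h5 hmn
        have e3 : r * n0 + n0 = (r + 1) * n0 := by ring
        exact e1.trans (e2.trans_eq e3)
      · have : g k + δ + (r : ℝ) * δ ≤ g l := by
          refine le_trans ?_ h6; linarith
        push_cast
        linarith

set_option maxHeartbeats 2000000 in
/-- **Lemma 4.2.** Let `X` be a Fréchet sequence space over `𝕜 = ℝ` or `ℂ` with a continuous
norm (encoded by an injective linear coordinate map `toSeq : X →ₗ (ℕ → 𝕜)` which is
continuous into the product space `ω = ℕ → 𝕜`), let `(P_j)` be an increasing sequence of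
norms defining the topology of `X`, suppose the unit sequences `e_k` belong to `X`, and let
`B_w : X → X` (here `T`) be a weighted shift with non-zero weights.  The following are
equivalent (computations in `[0,∞]`):
(i) there is `J` such that for every `j`,
`sup_{n≥1} sup_N inf_{k≥N} P_J(T^n e_k)/P_j(e_k) = ∞`;
(ii) there is `J` such that for every `j`,
`sup_{n≥1} sup_N inf_{k≥N} max_{1≤m≤n} P_J(T^m e_k)/P_j(e_k) > 1`. -/
theorem stmt_13 {𝕜 : Type*} [RCLike 𝕜]
    {X : Type*} [AddCommGroup X] [Module 𝕜 X] [UniformSpace X] [IsUniformAddGroup X]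
    [ContinuousSMul 𝕜 X] [CompleteSpace X] [T2Space X]
    (toSeq : X →ₗ[𝕜] (ℕ → 𝕜)) (hinj : Function.Injective toSeq)
    (hcont : Continuous (⇑toSeq))
    (P : ℕ → Seminorm 𝕜 X) (hPmono : Monotone P) (hP : WithSeminorms P)
    (hPnorm : ∀ (j : ℕ) (x : X), x ≠ 0 → 0 < P j x)
    (e : ℕ → X) (he : ∀ k, toSeq (e k) = Pi.single k 1)
    (w : ℕ → 𝕜) (hw : ∀ n, 1 ≤ n → w n ≠ 0)
    (T : X →L[𝕜] X) (hT0 : T (e 0) = 0)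
    (hT : ∀ k : ℕ, 1 ≤ k → T (e k) = w k • e (k - 1)) :
    (∃ J : ℕ, ∀ j : ℕ,
        (⨆ (n : ℕ) (_ : 1 ≤ n) (N : ℕ), ⨅ (k : ℕ) (_ : N ≤ k),
          ENNReal.ofReal (P J ((T ^ n) (e k))) / ENNReal.ofReal (P j (e k))) = ⊤) ↔
      (∃ J : ℕ, ∀ j : ℕ,
        1 < ⨆ (n : ℕ) (_ : 1 ≤ n) (N : ℕ), ⨅ (k : ℕ) (_ : N ≤ k),
          ⨆ m ∈ Finset.Icc 1 n,
            ENNReal.ofReal (P J ((T ^ m) (e k))) / ENNReal.ofReal (P j (e k))) := by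
  classical
  -- basic objects
  obtain ⟨c, hc⟩ : ∃ c : ℕ → 𝕜, c = fun k => ∏ i ∈ Finset.Icc 1 k, w i := ⟨_, rfl⟩
  have hc0 : ∀ k, c k ≠ 0 := by
    intro k
    rw [hc]
    exact Finset.prod_ne_zero_iff.mpr fun i hi => hw i (Finset.mem_Icc.mp hi).1
  obtain ⟨v, hv⟩ : ∃ v : ℕ → X, v = fun k => (c k)⁻¹ • e k := ⟨_, rfl⟩
  have he0 : ∀ k, e k ≠ 0 := by
    intro k hk
    have h1 := he k
    rw [hk, map_zero] at h1
    have h2 := congrFun h1 k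
    simp [Pi.single_eq_same] at h2
  have hv0 : ∀ k, v k ≠ 0 := by
    intro k
    rw [hv]
    exact smul_ne_zero (inv_ne_zero (hc0 k)) (he0 k)
  have hek : ∀ k, e k = c k • v k := by
    intro k
    rw [hv]
    exact (smul_inv_smul₀ (hc0 k) (e k)).symm
  have hTv : ∀ k, 1 ≤ k → T (v k) = v (k - 1) := by
    intro k hk
    have hkk : k = (k - 1) + 1 := (Nat.succ_pred_eq_of_pos hk).symm
    have hck : c k = c (k - 1) * w k := by
      simp only [hc]
      rw [hkk, Finset.prod_Icc_succ_top (by omega), ← hkk]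
    have hmul : (c k)⁻¹ * w k = (c (k - 1))⁻¹ := by
      rw [hck]
      field_simp
      rw [mul_comm, ← div_div, div_self (hw k hk)]
    simp only [hv]
    rw [map_smul, hT k hk, smul_smul, hmul]
  have hTmv : ∀ m k, m ≤ k → (T ^ m) (v k) = v (k - m) := by
    intro m
    induction m with
    | zero => intro k _; simp
    | succ m ih =>
      intro k hk
      have h1 : (1 : ℕ) ≤ k := by omega
      rw [pow_succ, ContinuousLinearMap.mul_apply, hTv k h1, ih (k - 1) (by omega)]
      congr 1
      omega
  have hTme : ∀ m k, m ≤ k → (T ^ m) (e k) = c k • v (k - m) := by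
    intro m k hmk
    rw [hek k, map_smul, hTmv m k hmk]
  -- positivity
  have hF0 : ∀ j k, 0 < P j (v k) := fun j k => hPnorm j _ (hv0 k)
  have hE0 : ∀ j k, 0 < P j (e k) := fun j k => hPnorm j _ (he0 k)
  -- the key ENNReal ↔ real translation
  have key : ∀ (J' j m k : ℕ), m ≤ k → ∀ t : ℝ, 0 ≤ t →
      ((ENNReal.ofReal t ≤
        ENNReal.ofReal (P J' ((T ^ m) (e k))) / ENNReal.ofReal (P j (e k))) ↔
        t * P j (v k) ≤ P J' (v (k - m))) := by
    intro J' j m k hmk t ht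
    have hnum : P J' ((T ^ m) (e k)) = ‖c k‖ * P J' (v (k - m)) := by
      rw [hTme m k hmk, map_smul_eq_mul]
    have hden : P j (e k) = ‖c k‖ * P j (v k) := by
      rw [hek k, map_smul_eq_mul]
    have hcpos : (0 : ℝ) < ‖c k‖ := norm_pos_iff.mpr (hc0 k)
    rw [hnum, hden]
    rw [ENNReal.le_div_iff_mul_le
        (Or.inl (ENNReal.ofReal_pos.mpr (mul_pos hcpos (hF0 j k))).ne')
        (Or.inl ENNReal.ofReal_ne_top)]
    rw [← ENNReal.ofReal_mul ht, ENNReal.ofReal_le_ofReal_iff (by positivity)]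
    rw [show t * (‖c k‖ * P j (v k)) = ‖c k‖ * (t * P j (v k)) by ring]
    exact mul_le_mul_iff_right₀ hcpos
  -- log version
  obtain ⟨G, hG⟩ : ∃ G : ℕ → ℕ → ℝ, G = fun j k => Real.log (P j (v k)) := ⟨_, rfl⟩
  constructor
  · -- (i) → (ii) : easy direction
    rintro ⟨J, hJ⟩
    refine ⟨J, fun j => ?_⟩
    have hle : (⨆ (n : ℕ) (_ : 1 ≤ n) (N : ℕ), ⨅ (k : ℕ) (_ : N ≤ k),
        ENNReal.ofReal (P J ((T ^ n) (e k))) / ENNReal.ofReal (P j (e k))) ≤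
        ⨆ (n : ℕ) (_ : 1 ≤ n) (N : ℕ), ⨅ (k : ℕ) (_ : N ≤ k),
          ⨆ m ∈ Finset.Icc 1 n,
            ENNReal.ofReal (P J ((T ^ m) (e k))) / ENNReal.ofReal (P j (e k)) := by
      refine iSup_mono fun n => iSup_mono fun hn => iSup_mono fun N => iInf_mono fun k =>
        iInf_mono fun hk => ?_
      exact le_iSup₂ (f := fun m (_ : m ∈ Finset.Icc 1 n) =>
        ENNReal.ofReal (P J ((T ^ m) (e k))) / ENNReal.ofReal (P j (e k))) n
        (Finset.mem_Icc.mpr ⟨hn, le_rfl⟩)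
    exact lt_of_lt_of_le ENNReal.one_lt_top ((hJ j).symm.trans_le hle)
  · -- (ii) → (i) : hard direction
    rintro ⟨J, hJ⟩
    -- Step A extraction: for each j, a uniform gain δ within window n
    have hA : ∀ j : ℕ, ∃ δ : ℝ, 0 < δ ∧ ∃ n N : ℕ, 1 ≤ n ∧ n ≤ N ∧
        ∀ k, N ≤ k → ∃ m, 1 ≤ m ∧ m ≤ n ∧ G j k + δ ≤ G J (k - m) := by
      intro j
      obtain ⟨n, h1⟩ := lt_iSup_iff.mp (hJ j)
      obtain ⟨hn1, h2⟩ := lt_iSup_iff.mp h1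
      obtain ⟨N, h3⟩ := lt_iSup_iff.mp h2
      obtain ⟨q, hq⟩ : ∃ q : ℝ≥0∞, q = (⨅ (k : ℕ) (_ : N ≤ k), ⨆ m ∈ Finset.Icc 1 n,
        ENNReal.ofReal (P J ((T ^ m) (e k))) / ENNReal.ofReal (P j (e k))) ⊓ 2 := ⟨_, rfl⟩
      have hq1 : 1 < q := by rw [hq]; exact lt_min h3 (by norm_num)
      have hqt : q ≠ ⊤ := by
        rw [hq]
        exact ne_top_of_le_ne_top (by norm_num) (min_le_right _ _)
      obtain ⟨t, htdef⟩ : ∃ t : ℝ, t = q.toReal := ⟨_, rfl⟩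
      have ht1 : 1 < t := by
        rw [htdef]
        have := ENNReal.toReal_lt_toReal (by norm_num) hqt |>.mpr hq1
        simpa using this
      refine ⟨Real.log t, Real.log_pos ht1, n, max N n, hn1, le_max_right _ _, ?_⟩
      intro k hk
      have hkN : N ≤ k := le_trans (le_max_left _ _) hk
      have hkn : n ≤ k := le_trans (le_max_right _ _) hk
      have hqle : q ≤ ⨆ m ∈ Finset.Icc 1 n,
          ENNReal.ofReal (P J ((T ^ m) (e k))) / ENNReal.ofReal (P j (e k)) := by
        rw [hq]
        refine le_trans (min_le_left _ _) ?_
        exact biInf_le _ hkN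
      rw [← Finset.sup_eq_iSup] at hqle
      obtain ⟨m, hm, hsup⟩ := Finset.exists_mem_eq_sup (Finset.Icc 1 n)
        (Finset.nonempty_Icc.mpr hn1)
        (fun m => ENNReal.ofReal (P J ((T ^ m) (e k))) / ENNReal.ofReal (P j (e k)))
      rw [hsup] at hqle
      obtain ⟨hm1, hmn⟩ := Finset.mem_Icc.mp hm
      have hofq : ENNReal.ofReal t = q := by rw [htdef, ENNReal.ofReal_toReal hqt]
      have hoft := hofq.le.trans hqle
      have hreal : t * P j (v k) ≤ P J (v (k - m)) :=
        (key J j m k (le_trans hmn hkn) t (by linarith)).mp hoft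
      refine ⟨m, hm1, hmn, ?_⟩
      have h9 : Real.log (t * P j (v k)) ≤ Real.log (P J (v (k - m))) :=
        Real.log_le_log (mul_pos (by linarith) (hF0 j k)) hreal
      rw [Real.log_mul (by linarith) (hF0 j k).ne'] at h9
      simp only [hG]
      linarith [h9]
    -- Step B: continuity bounds
    have hstep : ∀ j : ℕ, ∃ j' C, j ≤ j' ∧ 1 ≤ C ∧ ∀ x : X, P j (T x) ≤ C * P j' x := by
      intro j
      have hqc : Continuous fun x => P j (T x) :=
        (hP.continuous_seminorm j).comp T.continuous
      obtain ⟨s, C, hC0, hle⟩ :=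
        Seminorm.bound_of_continuous hP ((P j).comp (T : X →ₗ[𝕜] X)) hqc
      refine ⟨max j (s.sup id), max (C : ℝ) 1, le_max_left _ _, le_max_right _ _, ?_⟩
      intro x
      have h1 : P j (T x) ≤ (C : ℝ) * (s.sup P) x := by
        have := hle x
        simpa [Seminorm.comp_apply, NNReal.smul_def, smul_eq_mul] using this
      have h2 : (s.sup P) x ≤ P (max j (s.sup id)) x := by
        refine Seminorm.finset_sup_apply_le (apply_nonneg _ _) fun i hi => ?_
        exact Seminorm.le_def.mp
          (hPmono (le_trans (Finset.le_sup (f := id) hi) (le_max_right _ _))) x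
      calc P j (T x) ≤ (C : ℝ) * (s.sup P) x := h1
      _ ≤ max (C : ℝ) 1 * P (max j (s.sup id)) x := by
          refine mul_le_mul (le_max_left _ _) h2 (apply_nonneg _ _) ?_
          positivity
    -- extract the J-level A-data
    obtain ⟨δ0, hδ0, n0, N0, hn01, hn0N0, hA0⟩ := hA J
    -- iterated continuity bound up to n0 steps
    have hiter : ∀ i : ℕ, ∃ j' C, J ≤ j' ∧ 1 ≤ C ∧
        ∀ i', i' ≤ i → ∀ x : X, P J ((T ^ i') x) ≤ C * P j' x := by
      intro i
      induction i with
      | zero =>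
        refine ⟨J, 1, le_rfl, le_rfl, fun i' hi' x => ?_⟩
        have : i' = 0 := Nat.le_zero.mp hi'
        simp [this]
      | succ i ih =>
        obtain ⟨j1, C1, hj1, hC1, h1⟩ := ih
        obtain ⟨j2, C2, hj2, hC2, h2⟩ := hstep j1
        refine ⟨j2, C1 * C2, le_trans hj1 hj2, (by nlinarith : (1:ℝ) ≤ C1 * C2), ?_⟩
        intro i' hi' x
        rcases Nat.lt_or_ge i' (i + 1) with hlt | hge
        · have hle' : i' ≤ i := by omega
          calc P J ((T ^ i') x) ≤ C1 * P j1 x := h1 i' hle' x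
          _ ≤ C1 * P j2 x :=
              mul_le_mul_of_nonneg_left (Seminorm.le_def.mp (hPmono hj2) x) (by linarith)
          _ ≤ (C1 * C2) * P j2 x :=
              mul_le_mul_of_nonneg_right (by nlinarith) (apply_nonneg _ _)
        · have hi'' : i' = i + 1 := by omega
          subst hi''
          rw [pow_succ, ContinuousLinearMap.mul_apply]
          calc P J ((T ^ i) (T x)) ≤ C1 * P j1 (T x) := h1 i le_rfl (T x)
          _ ≤ C1 * (C2 * P j2 x) :=
              mul_le_mul_of_nonneg_left (h2 x) (by linarith)
          _ = (C1 * C2) * P j2 x := by ring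
    obtain ⟨J', K, hJJ', hK1, hBnd⟩ := hiter n0
    have hBlog : ∀ i k, i ≤ n0 → i ≤ k → G J (k - i) ≤ G J' k + Real.log K := by
      intro i k hin0 hik
      have h1 : P J (v (k - i)) ≤ K * P J' (v k) := by
        have := hBnd i hin0 (v k)
        rwa [hTmv i k hik] at this
      have h2 : Real.log (P J (v (k - i))) ≤ Real.log (K * P J' (v k)) :=
        Real.log_le_log (hF0 J (k - i)) h1
      rw [Real.log_mul (by linarith) (hF0 J' k).ne'] at h2
      simp only [hG]
      linarith
    -- main construction
    refine ⟨J', fun j => ?_⟩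
    obtain ⟨S, hS⟩ : ∃ S : ℝ≥0∞, S = ⨆ (n : ℕ) (_ : 1 ≤ n) (N : ℕ), ⨅ (k : ℕ) (_ : N ≤ k),
      ENNReal.ofReal (P J' ((T ^ n) (e k))) / ENNReal.ofReal (P j (e k)) := ⟨_, rfl⟩
    rw [← hS]
    have main : ∀ t : ℝ, 1 ≤ t → ENNReal.ofReal t ≤ S := by
      intro t ht
      obtain ⟨δj, hδj, nj, Nj, hnj1, hnjNj, hAj⟩ := hA j
      obtain ⟨s, hsdef⟩ : ∃ s : ℕ, s = ⌈(Real.log t + Real.log K) / δ0⌉₊ := ⟨_, rfl⟩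
      have hs : Real.log t + Real.log K ≤ (s : ℝ) * δ0 := by
        rw [hsdef]
        have h1 := Nat.le_ceil ((Real.log t + Real.log K) / δ0)
        rw [div_le_iff₀ hδ0] at h1
        exact h1
      obtain ⟨a, ha⟩ : ∃ a, a = n0 * s := ⟨_, rfl⟩
      obtain ⟨n, hndef⟩ : ∃ n, n = nj + a + n0 := ⟨_, rfl⟩
      obtain ⟨N, hNdef⟩ : ∃ N, N = N0 + Nj + n + n0 + nj + 1 := ⟨_, rfl⟩
      have hn1 : 1 ≤ n := by omega
      have hkey : ∀ k, N ≤ k → ENNReal.ofReal t ≤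
          ENNReal.ofReal (P J' ((T ^ n) (e k))) / ENNReal.ofReal (P j (e k)) := by
        intro k hk
        -- first step with A_j
        obtain ⟨m1, hm11, hm1nj, hgj⟩ := hAj k (by omega)
        -- chain with A_J down to barrier k - n
        have hchain := stmt13_chain (G J) n0 N0 δ0 hA0 (k - n) (by omega) (k - m1)
          (by omega)
        obtain ⟨l, r, hl1, hl2, hl3, hl4⟩ := hchain
        -- r ≥ s
        have hrs : s ≤ r := by
          have ha2 : a ≤ k - m1 - l := by omega
          have hb : n0 * s ≤ r * n0 := by rw [← ha]; exact le_trans ha2 hl3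
          rw [Nat.mul_comm r n0] at hb
          exact Nat.le_of_mul_le_mul_left hb (by omega)
        -- B step from l to k - n
        have hi : (k - n) - ((k - n) - l) = l := by omega
        have hBstep : G J l ≤ G J' (k - n) + Real.log K := by
          have := hBlog ((k - n) - l) (k - n) (by omega) (by omega)
          rwa [hi] at this
        -- combine
        have hr : (s : ℝ) * δ0 ≤ (r : ℝ) * δ0 := by
          have : (s : ℝ) ≤ (r : ℝ) := by exact_mod_cast hrs
          nlinarith
        have htotal : G j k + Real.log t ≤ G J' (k - n) := by
          have h6 : G J (k - m1) + (r : ℝ) * δ0 ≤ G J l := hl4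
          have : G j k + δj + (s : ℝ) * δ0 ≤ G J' (k - n) + Real.log K := by
            linarith
          linarith
        -- back to multiplicative form
        have hmult : t * P j (v k) ≤ P J' (v (k - n)) := by
          have h7 : Real.log (t * P j (v k)) ≤ Real.log (P J' (v (k - n))) := by
            rw [Real.log_mul (by linarith) (hF0 j k).ne']
            simp only [hG] at htotal
            linarith [htotal]
          have h8 : (0 : ℝ) < t * P j (v k) := mul_pos (by linarith) (hF0 j k)
          exact (Real.log_le_log_iff h8 (hF0 J' (k - n))).mp h7
        exact (key J' j n k (by omega) t (by linarith)).mpr hmult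
      calc ENNReal.ofReal t ≤ ⨅ (k : ℕ) (_ : N ≤ k),
          ENNReal.ofReal (P J' ((T ^ n) (e k))) / ENNReal.ofReal (P j (e k)) :=
        le_iInf fun k => le_iInf fun hk => hkey k hk
      _ ≤ S := by
        rw [hS]
        exact le_iSup_of_le n (le_iSup_of_le hn1 (le_iSup_of_le N le_rfl))
    -- conclude S = ⊤
    by_contra htop
    obtain ⟨q, hq⟩ := ENNReal.exists_nat_gt htop
    have h1 : ((q : ℕ) : ℝ≥0∞) ≤ S := by
      have := main ((q : ℝ) + 1) (by have := Nat.cast_nonneg (α := ℝ) q; linarith)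
      refine le_trans ?_ this
      rw [← ENNReal.ofReal_natCast q]
      exact ENNReal.ofReal_le_ofReal (by linarith)
    exact absurd h1 (not_le.mpr hq)
end

section
/- Let (w_n)_{n≥1} be a sequence of non-zero scalars and (a_{j,k})_{j,k≥1} a family of positive real numbers. Then for every j ≥ 1, the following are equivalent: (a) for every m ≥ 1, sup_{n≥1} sup_{N≥1} inf_{k≥N} [∏_{ν=1}^{n} |w_{ν+k}| · a_{j,k}] / a_{m,n+k} > 1; (b) for every m ≥ 1, sup_{n≥1} inf_{k≥1} [∏_{ν=1}^{n} |w_{ν+k}| · a_{j,k}] / a_{m,n+k} = ∞. -/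
open Filter Topology
open scoped ENNReal NNReal

section AuxProp44

variable {𝕜 : Type*} [RCLike 𝕜]

/-- Auxiliary quantity for Proposition 4.4. -/
noncomputable def auxT (w : ℕ → 𝕜) (a : ℕ → ℕ → ℝ) (j m n k : ℕ) : ℝ≥0∞ :=
  (∏ ν ∈ Finset.Icc 1 n, (‖w (ν + k)‖₊ : ℝ≥0∞)) * ENNReal.ofReal (a j k) /
    ENNReal.ofReal (a m (n + k))

variable {w : ℕ → 𝕜} {a : ℕ → ℕ → ℝ}

lemma prod_norm_pos (hw : ∀ n, 1 ≤ n → w n ≠ 0) (n k : ℕ) :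
    0 < ∏ ν ∈ Finset.Icc 1 n, ‖w (ν + k)‖ :=
  Finset.prod_pos fun ν hν => norm_pos_iff.2
    (hw _ (le_trans (Finset.mem_Icc.1 hν).1 (Nat.le_add_right ν k)))

lemma auxT_eq (ha : ∀ j k, 0 < a j k) (j m n k : ℕ) :
    auxT w a j m n k =
      ENNReal.ofReal ((∏ ν ∈ Finset.Icc 1 n, ‖w (ν + k)‖) * a j k / a m (n + k)) := by
  rw [auxT, ENNReal.ofReal_div_of_pos (ha m (n + k)),
    ENNReal.ofReal_mul (Finset.prod_nonneg fun ν _ => norm_nonneg _),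
    ENNReal.ofReal_prod_of_nonneg fun ν _ => norm_nonneg _]
  simp [ofReal_norm_eq_enorm]
  rfl

lemma auxT_pos (hw : ∀ n, 1 ≤ n → w n ≠ 0) (ha : ∀ j k, 0 < a j k) (j m n k : ℕ) :
    0 < auxT w a j m n k := by
  rw [auxT_eq ha]
  exact ENNReal.ofReal_pos.2
    (div_pos (mul_pos (prod_norm_pos hw n k) (ha j k)) (ha m (n + k)))

lemma auxT_ne_top (ha : ∀ j k, 0 < a j k) (j m n k : ℕ) :
    auxT w a j m n k ≠ ⊤ := by
  rw [auxT_eq ha]; exact ENNReal.ofReal_ne_top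

lemma auxT_zero (ha : ∀ j k, 0 < a j k) (j k : ℕ) : auxT w a j j 0 k = 1 := by
  rw [auxT_eq ha]
  simp [div_self (ha j k).ne']

lemma auxT_split (hw : ∀ n, 1 ≤ n → w n ≠ 0) (ha : ∀ j k, 0 < a j k)
    (j m n₁ n₂ k : ℕ) :
    auxT w a j m (n₁ + n₂) k = auxT w a j j n₁ k * auxT w a j m n₂ (n₁ + k) := by
  rw [auxT_eq ha, auxT_eq ha, auxT_eq ha,
    ← ENNReal.ofReal_mul
      (div_nonneg (mul_nonneg (Finset.prod_nonneg fun ν _ => norm_nonneg _) (ha j k).le)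
        (ha j (n₁ + k)).le)]
  congr 1
  have hsplit : (∏ ν ∈ Finset.Icc 1 (n₁ + n₂), ‖w (ν + k)‖)
      = (∏ ν ∈ Finset.Icc 1 n₁, ‖w (ν + k)‖) * ∏ ν ∈ Finset.Icc 1 n₂, ‖w (ν + (n₁ + k))‖ := by
    induction n₂ with
    | zero => simp
    | succ p ih =>
      rw [show n₁ + (p + 1) = (n₁ + p) + 1 from rfl,
        Finset.prod_Icc_succ_top (Nat.le_add_left 1 (n₁ + p)) _, ih,
        Finset.prod_Icc_succ_top (Nat.le_add_left 1 p) _, mul_assoc,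
        show n₁ + p + 1 + k = p + 1 + (n₁ + k) by omega]
  rw [hsplit, show n₁ + n₂ + k = n₂ + (n₁ + k) by ring]
  have h1 := (ha j (n₁ + k)).ne'
  have h2 := (ha m (n₂ + (n₁ + k))).ne'
  field_simp

lemma prop44 (w : ℕ → 𝕜) (hw : ∀ n, 1 ≤ n → w n ≠ 0)
    (a : ℕ → ℕ → ℝ) (ha : ∀ j k, 0 < a j k) (j : ℕ) (hj : 1 ≤ j) :
    (∀ m : ℕ, 1 ≤ m →
        1 < ⨆ (n : ℕ) (_ : 1 ≤ n) (N : ℕ) (_ : 1 ≤ N), ⨅ (k : ℕ) (_ : N ≤ k),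
          auxT w a j m n k) ↔
      (∀ m : ℕ, 1 ≤ m →
        (⨆ (n : ℕ) (_ : 1 ≤ n), ⨅ (k : ℕ) (_ : 1 ≤ k), auxT w a j m n k) = ⊤) := by
  constructor
  · intro hA m hm
    -- extract witnesses for index j
    obtain ⟨n₁, hn₁, N₁, hN₁, ht⟩ :
        ∃ n₁, ∃ _ : 1 ≤ n₁, ∃ N₁, ∃ _ : 1 ≤ N₁,
          1 < ⨅ (k : ℕ) (_ : N₁ ≤ k), auxT w a j j n₁ k := by
      simpa only [lt_iSup_iff] using hA j hj
    set t := ⨅ (k : ℕ) (_ : N₁ ≤ k), auxT w a j j n₁ k with ht_def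
    have htle : ∀ k, N₁ ≤ k → t ≤ auxT w a j j n₁ k := fun k hk => iInf₂_le k hk
    have ht1 : 1 ≤ t := ht.le
    -- extract witnesses for index m
    obtain ⟨n₂, hn₂, N₂, hN₂, hs⟩ :
        ∃ n₂, ∃ _ : 1 ≤ n₂, ∃ N₂, ∃ _ : 1 ≤ N₂,
          1 < ⨅ (k : ℕ) (_ : N₂ ≤ k), auxT w a j m n₂ k := by
      simpa only [lt_iSup_iff] using hA m hm
    set s := ⨅ (k : ℕ) (_ : N₂ ≤ k), auxT w a j m n₂ k with hs_def
    have hsle : ∀ k, N₂ ≤ k → s ≤ auxT w a j m n₂ k := fun k hk => iInf₂_le k hk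
    have hs0 : (0 : ℝ≥0∞) < s := lt_trans zero_lt_one hs
    have hs_ne_top : s ≠ ⊤ :=
      ne_top_of_le_ne_top (auxT_ne_top ha j m n₂ N₂) (hsle N₂ le_rfl)
    set K := max N₁ N₂ with hK_def
    have hK1 : 1 ≤ K := le_trans hN₁ (le_max_left _ _)
    -- Step A
    have stepA : ∀ q k, N₁ ≤ k → t ^ q ≤ auxT w a j j (q * n₁) k := by
      intro q
      induction q with
      | zero => intro k hk; simp [auxT_zero ha]
      | succ p ih =>
        intro k hk
        rw [show (p + 1) * n₁ = p * n₁ + n₁ by ring, auxT_split hw ha, pow_succ]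
        exact mul_le_mul' (ih k hk) (htle _ (le_trans hk (Nat.le_add_left k (p * n₁))))
    -- Step B
    have stepB : ∀ q k, K ≤ k → t ^ q * s ≤ auxT w a j m (q * n₁ + n₂) k := by
      intro q k hk
      rw [auxT_split hw ha]
      exact mul_le_mul' (stepA q k (le_trans (le_max_left _ _) hk))
        (hsle _ (le_trans (le_trans (le_max_right _ _) hk) (Nat.le_add_left k (q * n₁))))
    -- Step C
    have hne' : (Finset.range n₁).Nonempty := ⟨0, Finset.mem_range.2 hn₁⟩
    set ε' := (Finset.range n₁).inf' hne' (fun r => auxT w a j j r K) with hε'_def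
    have hε'pos : 0 < ε' :=
      (Finset.lt_inf'_iff hne').2 fun r _ => auxT_pos hw ha j j r K
    have hε'top : ε' ≠ ⊤ :=
      ne_top_of_le_ne_top (auxT_ne_top ha j j 0 K)
        (Finset.inf'_le _ (Finset.mem_range.2 hn₁))
    have stepC : ∀ L, n₂ ≤ L →
        ε' * (t ^ ((L - n₂) / n₁) * s) ≤ auxT w a j m L K := by
      intro L hL
      set d := L - n₂ with hd_def
      have hdm : d / n₁ * n₁ + d % n₁ = d := Nat.div_add_mod' d n₁
      have hL' : L = d % n₁ + (d / n₁ * n₁ + n₂) := by omega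
      rw [hL', auxT_split hw ha]
      exact mul_le_mul'
        (Finset.inf'_le _ (Finset.mem_range.2 (Nat.mod_lt _ (by omega))))
        (stepB (d / n₁) (d % n₁ + K) (Nat.le_add_left K _))
    -- Step D
    have hneK : (Finset.Icc 1 K).Nonempty := ⟨1, Finset.mem_Icc.2 ⟨le_rfl, hK1⟩⟩
    set ε := (Finset.Icc 1 K).inf' hneK (fun k => auxT w a j j (K - k) k) with hε_def
    have hεpos : 0 < ε :=
      (Finset.lt_inf'_iff hneK).2 fun k _ => auxT_pos hw ha j j (K - k) k
    have hεtop : ε ≠ ⊤ :=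
      ne_top_of_le_ne_top (auxT_ne_top ha j j (K - 1) 1)
        (Finset.inf'_le _ (Finset.mem_Icc.2 ⟨le_rfl, hK1⟩))
    have stepD : ∀ L k, 1 ≤ k → k ≤ K → K ≤ L →
        ε * auxT w a j m (L - (K - k)) K ≤ auxT w a j m L k := by
      intro L k hk1 hkK hKL
      have e : auxT w a j m L k
          = auxT w a j j (K - k) k * auxT w a j m (L - (K - k)) K := by
        conv_lhs => rw [show L = (K - k) + (L - (K - k)) by omega]
        rw [auxT_split hw ha, show K - k + k = K by omega]
      rw [e]
      exact mul_le_mul' (Finset.inf'_le _ (Finset.mem_Icc.2 ⟨hk1, hkK⟩)) le_rfl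
    -- main estimate
    have main : ∀ C : ℝ≥0∞, C ≠ ⊤ → ∃ n', 1 ≤ n' ∧ ∀ k, 1 ≤ k → C ≤ auxT w a j m n' k := by
      intro C hC
      set c₁ := min s (ε * ε' * s) with hc₁_def
      have hc₁0 : c₁ ≠ 0 := by
        refine (lt_min hs0 ?_).ne'
        exact ENNReal.mul_pos (ENNReal.mul_pos hεpos.ne' hε'pos.ne').ne' hs0.ne'
      have hc₁top : c₁ ≠ ⊤ := ne_top_of_le_ne_top hs_ne_top (min_le_left _ _)
      obtain ⟨p, hp⟩ : ∃ p, C ≤ c₁ * t ^ p := by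
        rcases eq_or_ne t ⊤ with htop | htop
        · refine ⟨1, ?_⟩
          rw [htop]
          simp [ENNReal.mul_top hc₁0, le_top]
        · have ht1' : 1 < t.toNNReal := by
            have := ENNReal.toNNReal_lt_toNNReal (by simp) htop |>.2 ht
            simpa using this
          obtain ⟨p, hp⟩ := pow_unbounded_of_one_lt ((C / c₁).toNNReal) ht1'
          refine ⟨p, ?_⟩
          have hdiv : C / c₁ < ⊤ := ENNReal.div_lt_top hC hc₁0
          have h1 : C / c₁ < t ^ p := by
            calc C / c₁ = ((C / c₁).toNNReal : ℝ≥0∞) := (ENNReal.coe_toNNReal hdiv.ne).symm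
            _ < ((t.toNNReal ^ p : ℝ≥0) : ℝ≥0∞) := ENNReal.coe_lt_coe.2 hp
            _ = t ^ p := by rw [ENNReal.coe_pow, ENNReal.coe_toNNReal htop]
          calc C = c₁ * (C / c₁) := (ENNReal.mul_div_cancel hc₁0 hc₁top).symm
          _ ≤ c₁ * t ^ p := mul_le_mul' le_rfl h1.le
      have hKn : K ≤ (p + K) * n₁ := le_trans (Nat.le_add_left K p)
        (Nat.le_mul_of_pos_right _ (by omega))
      refine ⟨(p + K) * n₁ + n₂, by omega, ?_⟩
      intro k hk1
      rcases le_or_gt K k with hK | hK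
      · refine le_trans ?_ (stepB (p + K) k hK)
        calc C ≤ c₁ * t ^ p := hp
        _ ≤ s * t ^ (p + K) :=
          mul_le_mul' (min_le_left _ _) (pow_le_pow_right₀ ht1 (Nat.le_add_right p K))
        _ = t ^ (p + K) * s := mul_comm _ _
      · have hL : K ≤ (p + K) * n₁ + n₂ := le_trans hKn (Nat.le_add_right _ _)
        refine le_trans ?_ (stepD ((p + K) * n₁ + n₂) k hk1 hK.le hL)
        have h1 : n₂ ≤ (p + K) * n₁ + n₂ - (K - k) := by omega
        refine le_trans ?_ (mul_le_mul' le_rfl (stepC _ h1))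
        set q' := ((p + K) * n₁ + n₂ - (K - k) - n₂) / n₁ with hq'_def
        have hpq' : p ≤ q' := by
          rw [hq'_def, show (p + K) * n₁ + n₂ - (K - k) - n₂ = (p + K) * n₁ - (K - k) by omega]
          refine (Nat.le_div_iff_mul_le (by omega)).2 ?_
          have e : (p + K) * n₁ = p * n₁ + K * n₁ := add_mul p K n₁
          have hKk : K - k ≤ K * n₁ :=
            le_trans (by omega) (Nat.le_mul_of_pos_right _ (by omega))
          omega
        calc C ≤ c₁ * t ^ p := hp
        _ ≤ (ε * ε' * s) * t ^ q' :=
          mul_le_mul' (min_le_right _ _) (pow_le_pow_right₀ ht1 hpq')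
        _ = ε * (ε' * (t ^ q' * s)) := by ring
    -- conclude
    by_contra hne
    obtain ⟨n', hn', hall⟩ := main
      ((⨆ (n : ℕ) (_ : 1 ≤ n), ⨅ (k : ℕ) (_ : 1 ≤ k), auxT w a j m n k) + 1)
      (by simp [ENNReal.add_eq_top, hne])
    have h1 : (⨆ (n : ℕ) (_ : 1 ≤ n), ⨅ (k : ℕ) (_ : 1 ≤ k), auxT w a j m n k) + 1
        ≤ ⨅ (k : ℕ) (_ : 1 ≤ k), auxT w a j m n' k := le_iInf₂ hall
    have h2 : (⨅ (k : ℕ) (_ : 1 ≤ k), auxT w a j m n' k)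
        ≤ ⨆ (n : ℕ) (_ : 1 ≤ n), ⨅ (k : ℕ) (_ : 1 ≤ k), auxT w a j m n k :=
      le_iSup₂ (f := fun n (_ : 1 ≤ n) => ⨅ (k : ℕ) (_ : 1 ≤ k), auxT w a j m n k) n' hn'
    exact absurd (le_trans h1 h2)
      (not_le.2 (ENNReal.lt_add_right hne one_ne_zero))
  · intro hB m hm
    have h1 : (1 : ℝ≥0∞) <
        ⨆ (n : ℕ) (_ : 1 ≤ n), ⨅ (k : ℕ) (_ : 1 ≤ k), auxT w a j m n k := by
      rw [hB m hm]; exact ENNReal.one_lt_top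
    obtain ⟨n, hn, h1⟩ :
        ∃ n, ∃ _ : 1 ≤ n, (1 : ℝ≥0∞) < ⨅ (k : ℕ) (_ : 1 ≤ k), auxT w a j m n k := by
      simpa only [lt_iSup_iff] using h1
    refine lt_of_lt_of_le h1 ?_
    calc (⨅ (k : ℕ) (_ : 1 ≤ k), auxT w a j m n k)
        ≤ ⨆ (N : ℕ) (_ : 1 ≤ N), ⨅ (k : ℕ) (_ : N ≤ k), auxT w a j m n k :=
          le_iSup₂ (f := fun N (_ : 1 ≤ N) => ⨅ (k : ℕ) (_ : N ≤ k), auxT w a j m n k) 1 le_rfl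
    _ ≤ ⨆ (n : ℕ) (_ : 1 ≤ n) (N : ℕ) (_ : 1 ≤ N), ⨅ (k : ℕ) (_ : N ≤ k), auxT w a j m n k :=
          le_iSup₂ (f := fun n (_ : 1 ≤ n) =>
            ⨆ (N : ℕ) (_ : 1 ≤ N), ⨅ (k : ℕ) (_ : N ≤ k), auxT w a j m n k) n hn

end AuxProp44

/-- **Proposition 4.4.** Let `(w_n)_{n≥1}` be a sequence of non-zero scalars (in `ℝ` or `ℂ`)
and `(a_{j,k})_{j,k≥1}` a family of (strictly) positive real numbers.  Then for every `j ≥ 1`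
the following are equivalent (suprema and infima taken in `[0,∞]`):
(a) for every `m ≥ 1`, `sup_{n≥1} sup_{N≥1} inf_{k≥N} (∏_{ν=1}^{n} |w_{ν+k}|) a_{j,k} / a_{m,n+k} > 1`;
(b) for every `m ≥ 1`, `sup_{n≥1} inf_{k≥1} (∏_{ν=1}^{n} |w_{ν+k}|) a_{j,k} / a_{m,n+k} = ∞`. -/
theorem stmt_15 {𝕜 : Type*} [RCLike 𝕜] (w : ℕ → 𝕜) (hw : ∀ n, 1 ≤ n → w n ≠ 0)
    (a : ℕ → ℕ → ℝ) (ha : ∀ j k, 0 < a j k) (j : ℕ) (hj : 1 ≤ j) :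
    (∀ m : ℕ, 1 ≤ m →
        1 < ⨆ (n : ℕ) (_ : 1 ≤ n) (N : ℕ) (_ : 1 ≤ N), ⨅ (k : ℕ) (_ : N ≤ k),
          (∏ ν ∈ Finset.Icc 1 n, (‖w (ν + k)‖₊ : ℝ≥0∞)) * ENNReal.ofReal (a j k) /
            ENNReal.ofReal (a m (n + k))) ↔
      (∀ m : ℕ, 1 ≤ m →
        (⨆ (n : ℕ) (_ : 1 ≤ n), ⨅ (k : ℕ) (_ : 1 ≤ k),
          (∏ ν ∈ Finset.Icc 1 n, (‖w (ν + k)‖₊ : ℝ≥0∞)) * ENNReal.ofReal (a j k) /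
            ENNReal.ofReal (a m (n + k))) = ⊤) := by
  exact prop44 w hw a ha j hj
end
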